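/- arXiv:1501.00763 — 6 statements merged into one kernel-verified Lean document; each statement's English description precedes it below -/
import Mathlib

section
/- Let G be a group and H a normal subgroup of G with G/H finite. If π is an irreducible representation of G (over ℂ), then the restriction of π to H is a direct sum of finitely many irreducible representations of H. -/
noncomputable section

variable {G : Type*} [Group G]

/-- A submodule invariant under a representation. -/
def RepInvariant {V : Type*} [AddCommGroup V] [Module ℂ V]
    (π : Representation ℂ G V) (p : Submodule ℂ V) : Prop :=
  ∀ g : G, ∀ v ∈ p, π g v ∈ p

/-- An irreducible (simple) representation. -/
def RepIrreducible {V : Type*} [AddCommGroup V] [Module ℂ V]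
    (π : Representation ℂ G V) : Prop :=
  Nontrivial V ∧ ∀ p : Submodule ℂ V, RepInvariant π p → p = ⊥ ∨ p = ⊤

/-- Isomorphism of representations. -/
def RepIso {V W : Type*} [AddCommGroup V] [Module ℂ V] [AddCommGroup W] [Module ℂ W]
    (π : Representation ℂ G V) (σ : Representation ℂ G W) : Prop :=
  ∃ e : V ≃ₗ[ℂ] W, ∀ g v, e (π g v) = σ g (e v)

/-- `σ` occurs as a subrepresentation of `π`. -/
def RepContains {V W : Type*} [AddCommGroup V] [Module ℂ V] [AddCommGroup W] [Module ℂ W]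
    (π : Representation ℂ G V) (σ : Representation ℂ G W) : Prop :=
  ∃ j : W →ₗ[ℂ] V, Function.Injective j ∧ ∀ g w, j (σ g w) = π g (j w)

/-- Restriction of a representation to a subgroup. -/
def RepRes {V : Type*} [AddCommGroup V] [Module ℂ V] (H : Subgroup G)
    (π : Representation ℂ G V) : Representation ℂ ↥H V :=
  π.comp H.subtype

/-- The conjugation automorphism `h ↦ g h g⁻¹` of a normal subgroup. -/
def conjHom (H : Subgroup G) [hH : H.Normal] (g : G) : ↥H →* ↥H where
  toFun h := ⟨g * (h : G) * g⁻¹, hH.conj_mem _ h.2 g⟩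
  map_one' := by ext; simp
  map_mul' a b := by ext; simp

/-- The conjugate representation `ρ^g : h ↦ ρ(g h g⁻¹)`. -/
def RepConj {W : Type*} [AddCommGroup W] [Module ℂ W] {H : Subgroup G} [H.Normal]
    (ρ : Representation ℂ ↥H W) (g : G) : Representation ℂ ↥H W :=
  ρ.comp (conjHom H g)

/-- The subrepresentation on an invariant submodule. -/
def RepSub {V : Type*} [AddCommGroup V] [Module ℂ V] (π : Representation ℂ G V)
    (p : Submodule ℂ V) (hp : RepInvariant π p) : Representation ℂ G ↥p where
  toFun g := (π g).restrict (hp g)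
  map_one' := by ext v; simp [LinearMap.restrict_apply]
  map_mul' a b := by ext v; simp [LinearMap.restrict_apply]

/-- `π` is a (finite) direct sum of irreducible subrepresentations. -/
def RepFiniteSemisimple {V : Type*} [AddCommGroup V] [Module ℂ V]
    (π : Representation ℂ G V) : Prop :=
  ∃ (n : ℕ) (p : Fin n → Submodule ℂ V) (hp : ∀ i, RepInvariant π (p i)),
    (∀ i, RepIrreducible (RepSub π (p i) (hp i))) ∧ DirectSum.IsInternal p

/-- Schur's lemma holds for `ρ`: every self-intertwiner is a scalar. -/
def RepSchur {H : Type*} [Group H] {W : Type*} [AddCommGroup W] [Module ℂ W]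
    (ρ : Representation ℂ H W) : Prop :=
  ∀ f : W →ₗ[ℂ] W, (∀ h w, f (ρ h w) = ρ h (f w)) → ∃ c : ℂ, f = c • LinearMap.id

/-- The space of the induced representation `Ind_H^G ρ`. -/
def IndSpace {W : Type*} [AddCommGroup W] [Module ℂ W] (H : Subgroup G)
    (ρ : Representation ℂ ↥H W) : Submodule ℂ (G → W) where
  carrier := {f | ∀ (g : G) (h : ↥H), f (g * h) = ρ h⁻¹ (f g)}
  add_mem' := by intro a b ha hb g h; simp [ha g h, hb g h]
  zero_mem' := by intro g h; simp
  smul_mem' := by intro c f hf g h; simp [hf g h]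

/-- The induced representation `Ind_H^G ρ`, with `(x • f)(g) = f (x⁻¹ g)`. -/
def IndRep {W : Type*} [AddCommGroup W] [Module ℂ W] (H : Subgroup G)
    (ρ : Representation ℂ ↥H W) : Representation ℂ G ↥(IndSpace H ρ) where
  toFun x :=
    { toFun := fun f => ⟨fun g => (f : G → W) (x⁻¹ * g), by
        intro g h
        have := f.2 (x⁻¹ * g) h
        simpa [mul_assoc] using this⟩
      map_add' := by intro a b; ext g; simp
      map_smul' := by intro c a; ext g; simp }
  map_one' := by ext f g; simp
  map_mul' a b := by ext f g; simp [mul_assoc]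

/-- The twist `π ⊗ ω` of a representation by a character. -/
def TwistRep {V : Type*} [AddCommGroup V] [Module ℂ V] (π : Representation ℂ G V)
    (ω : G →* ℂˣ) : Representation ℂ G V where
  toFun g := (ω g : ℂ) • π g
  map_one' := by simp
  map_mul' a b := by
    ext v
    simp [Module.End.mul_apply, map_mul, smul_smul, mul_comm]

/-- The direct sum `⊕_i σ_i` of a (finite) family of representations on the same space. -/
def PiRep {ι : Type*} {W : Type*} [AddCommGroup W] [Module ℂ W]
    (σ : ι → Representation ℂ G W) : Representation ℂ G (ι → W) where
  toFun g := LinearMap.pi fun i => (σ i g).comp (LinearMap.proj i)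
  map_one' := by ext v i; simp
  map_mul' a b := by ext v i; simp

end
section Aux

variable {K : Type*} [Group K] {W : Type*} [AddCommGroup W] [Module ℂ W]

noncomputable instance repAsModuleAddCommGroup (ρ : Representation ℂ K W) :
    AddCommGroup ρ.asModule :=
  inferInstanceAs (AddCommGroup W)

theorem asAlgebraHom_mem (ρ : Representation ℂ K W) {p : Submodule ℂ W}
    (hp : RepInvariant ρ p) (b : MonoidAlgebra ℂ K) {v : W} (hv : v ∈ p) :
    ρ.asAlgebraHom b v ∈ p := by
  induction b using MonoidAlgebra.induction_linear with
  | zero => simpa using p.zero_mem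
  | add f g hf hg => rw [map_add, LinearMap.add_apply]; exact p.add_mem hf hg
  | single g c =>
      rw [Representation.asAlgebraHom_single, LinearMap.smul_apply]
      exact p.smul_mem c (hp g v hv)

/-- The `MonoidAlgebra`-submodule corresponding to an invariant subspace. -/
def invtToB (ρ : Representation ℂ K W) (p : Submodule ℂ W) (hp : RepInvariant ρ p) :
    Submodule (MonoidAlgebra ℂ K) ρ.asModule where
  carrier := p.carrier
  add_mem' := p.add_mem'
  zero_mem' := p.zero_mem'
  smul_mem' := fun b {x} hx => asAlgebraHom_mem ρ hp b hx

/-- The invariant subspace corresponding to a `MonoidAlgebra`-submodule. -/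
def bToInvt (ρ : Representation ℂ K W) (q : Submodule (MonoidAlgebra ℂ K) ρ.asModule) :
    Submodule ℂ W where
  carrier := q.carrier
  add_mem' := q.add_mem'
  zero_mem' := q.zero_mem'
  smul_mem' := fun c {x} hx => by
    have h : (algebraMap ℂ (MonoidAlgebra ℂ K) c) • (show ρ.asModule from x) ∈ q :=
      q.smul_mem _ hx
    have h2 : (algebraMap ℂ (MonoidAlgebra ℂ K) c) • (show ρ.asModule from x) = c • x := by
      show ρ.asAlgebraHom (algebraMap ℂ (MonoidAlgebra ℂ K) c) x = c • x
      rw [AlgHom.commutes, Module.algebraMap_end_apply]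
    rwa [h2] at h

@[simp] theorem mem_invtToB (ρ : Representation ℂ K W) {p : Submodule ℂ W}
    {hp : RepInvariant ρ p} {x : ρ.asModule} : x ∈ invtToB ρ p hp ↔ (x : W) ∈ p := Iff.rfl

@[simp] theorem mem_bToInvt (ρ : Representation ℂ K W)
    {q : Submodule (MonoidAlgebra ℂ K) ρ.asModule} {x : W} :
    x ∈ bToInvt ρ q ↔ (x : ρ.asModule) ∈ q := Iff.rfl

theorem of_smul_asModule (ρ : Representation ℂ K W) (k : K) (x : ρ.asModule) :
    (MonoidAlgebra.of ℂ K k) • x = ρ k (x : W) := by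
  show ρ.asAlgebraHom (MonoidAlgebra.of ℂ K k) x = _
  rw [Representation.asAlgebraHom_of]

theorem bToInvt_invariant (ρ : Representation ℂ K W)
    (q : Submodule (MonoidAlgebra ℂ K) ρ.asModule) : RepInvariant ρ (bToInvt ρ q) := by
  intro k v hv
  have := q.smul_mem (MonoidAlgebra.of ℂ K k) hv
  exact (of_smul_asModule ρ k v) ▸ this

theorem bToInvt_invtToB (ρ : Representation ℂ K W) (p : Submodule ℂ W)
    (hp : RepInvariant ρ p) : bToInvt ρ (invtToB ρ p hp) = p := rfl

theorem invtToB_bToInvt (ρ : Representation ℂ K W)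
    (q : Submodule (MonoidAlgebra ℂ K) ρ.asModule) :
    invtToB ρ (bToInvt ρ q) (bToInvt_invariant ρ q) = q := rfl

theorem bToInvt_eq_top_iff (ρ : Representation ℂ K W)
    {q : Submodule (MonoidAlgebra ℂ K) ρ.asModule} : bToInvt ρ q = ⊤ ↔ q = ⊤ := by
  constructor <;> intro h
  · ext x; exact ⟨fun _ => trivial, fun _ => (Submodule.ext_iff.mp h x).symm.mp trivial⟩
  · ext x; exact ⟨fun _ => trivial, fun _ => (Submodule.ext_iff.mp h x).symm.mp trivial⟩

theorem bToInvt_eq_bot_iff (ρ : Representation ℂ K W)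
    {q : Submodule (MonoidAlgebra ℂ K) ρ.asModule} : bToInvt ρ q = ⊥ ↔ q = ⊥ := by
  constructor <;> intro h <;> ext x
  · rw [Submodule.mem_bot]
    have := Submodule.ext_iff.mp h x
    exact this.trans (Submodule.mem_bot _)
  · rw [Submodule.mem_bot]
    have := Submodule.ext_iff.mp h x
    exact this.trans (Submodule.mem_bot _)

end Aux

section Aux2

variable {K : Type*} [Group K] {W : Type*} [AddCommGroup W] [Module ℂ W]

@[simp] theorem RepSub_coe {V : Type*} [AddCommGroup V] [Module ℂ V] {G : Type*} [Group G]
    (π : Representation ℂ G V) (p : Submodule ℂ V) (hp : RepInvariant π p) (g : G) (x : p) :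
    (RepSub π p hp g x : V) = π g (x : V) := rfl

theorem repIrreducible_of_isSimple (ρ : Representation ℂ K W)
    (q : Submodule (MonoidAlgebra ℂ K) ρ.asModule)
    (hq : IsSimpleModule (MonoidAlgebra ℂ K) q) :
    RepIrreducible (RepSub ρ (bToInvt ρ q) (bToInvt_invariant ρ q)) := by
  set p := bToInvt ρ q with hpdef
  constructor
  · -- Nontrivial
    rw [Submodule.nontrivial_iff_ne_bot, Ne, bToInvt_eq_bot_iff]
    intro hbot
    have hnt : Nontrivial q := IsSimpleModule.nontrivial (MonoidAlgebra ℂ K) q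
    rw [hbot] at hnt
    obtain ⟨⟨x, hx⟩, ⟨y, hy⟩, hne⟩ := hnt.exists_pair_ne
    rw [Submodule.mem_bot] at hx hy
    exact hne (Subtype.ext (hx.trans hy.symm))
  · intro s0 hs0
    set s' : Submodule ℂ W := s0.map p.subtype with hs'def
    have hs'le : s' ≤ p := by
      rintro x ⟨y, hy, rfl⟩; exact y.2
    have hs'inv : RepInvariant ρ s' := by
      rintro k x ⟨y, hy, rfl⟩
      exact ⟨RepSub ρ p (bToInvt_invariant ρ q) k y, hs0 k y hy, rfl⟩
    set t : Submodule (MonoidAlgebra ℂ K) q :=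
      (invtToB ρ s' hs'inv).comap q.subtype with htdef
    have hmapt : t.map q.subtype = invtToB ρ s' hs'inv := by
      rw [htdef, Submodule.map_comap_subtype]
      exact inf_eq_right.mpr (fun x hx => hs'le hx)
    rcases hq.1.2 t with ht | ht
    · left
      have hb : invtToB ρ s' hs'inv = ⊥ := by rw [← hmapt, ht, Submodule.map_bot]
      have hs'bot : s' = ⊥ := by
        ext x
        have := Submodule.ext_iff.mp hb x
        rw [Submodule.mem_bot] at *
        exact this.trans (Submodule.mem_bot _)
      refine Submodule.map_injective_of_injective p.injective_subtype ?_
      rw [Submodule.map_bot]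
      exact hs'def ▸ hs'bot
    · right
      have hb : invtToB ρ s' hs'inv = q := by rw [← hmapt, ht, Submodule.map_subtype_top]
      have hs'p : s' = p := by
        have := congrArg (bToInvt ρ) hb
        rwa [bToInvt_invtToB] at this
      refine Submodule.map_injective_of_injective p.injective_subtype ?_
      rw [Submodule.map_subtype_top]
      exact hs'def ▸ hs'p

theorem repInvariant_iSup (ρ : Representation ℂ K W) {ι : Sort*} (p : ι → Submodule ℂ W)
    (h : ∀ i, RepInvariant ρ (p i)) : RepInvariant ρ (⨆ i, p i) := by
  intro k v hv
  have hmap : Submodule.map (ρ k) (⨆ i, p i) ≤ ⨆ i, p i := by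
    rw [Submodule.map_iSup]
    exact iSup_mono fun i => fun x ⟨y, hy, hxy⟩ => hxy ▸ h i k y hy
  exact hmap ⟨v, hv, rfl⟩

theorem isSemisimpleModule_pi {R : Type*} [Ring R] {ι : Type*} [Finite ι]
    {N : ι → Type*} [∀ i, AddCommGroup (N i)] [∀ i, Module R (N i)]
    [∀ i, IsSemisimpleModule R (N i)] : IsSemisimpleModule R (∀ i, N i) := by
  classical
  refine isSemisimpleModule_of_isSemisimpleModule_submodule'
    (p := fun i => LinearMap.range (LinearMap.single R N i)) (fun i => ?_)
    (LinearMap.iSup_range_single R N)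
  exact IsSemisimpleModule.range _

theorem noeth_art_of_simple {R N : Type*} [Ring R] [AddCommGroup N] [Module R N]
    (h : IsSimpleModule R N) : IsNoetherian R N ∧ IsArtinian R N := by
  have h1 : IsSimpleModule R (N ⧸ (⊥ : Submodule R N)) :=
    IsSimpleModule.congr (Submodule.quotEquivOfEqBot _ rfl)
  have : IsFiniteLength R N := .of_simple_quotient (N := ⊥) .of_subsingleton
  exact isFiniteLength_iff_isNoetherian_isArtinian.mp this

end Aux2


section MainAux

theorem isSemisimpleModule_of_isSimpleModule {R N : Type*} [Ring R] [AddCommGroup N]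
    [Module R N] (h : IsSimpleModule R N) : IsSemisimpleModule R N := by
  refine IsSemisimpleModule.of_sSup_simples_eq_top ?_
  rw [eq_top_iff]
  refine le_sSup ?_
  exact IsSimpleModule.congr Submodule.topEquiv

variable {G : Type} [Group G] (H : Subgroup G) [hH : H.Normal]
variable {V : Type} [AddCommGroup V] [Module ℂ V] (π : Representation ℂ G V)

theorem repRes_apply (h : ↥H) (v : V) : RepRes H π h v = π (h : G) v := rfl

theorem map_repInvariant {p : Submodule ℂ V} (hp : RepInvariant (RepRes H π) p) (g : G) :
    RepInvariant (RepRes H π) (p.map (π g)) := by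
  rintro k x ⟨y, hy, rfl⟩
  have hmem : (g⁻¹ * (k : G) * g : G) ∈ H := by
    have := hH.conj_mem _ k.2 g⁻¹
    simpa [mul_assoc] using this
  refine ⟨RepRes H π ⟨g⁻¹ * (k : G) * g, hmem⟩ y, hp _ y hy, ?_⟩
  show π g (π (g⁻¹ * (k : G) * g) y) = π (k : G) (π g y)
  rw [← Module.End.mul_apply, ← map_mul, ← Module.End.mul_apply, ← map_mul]
  congr 2
  group

theorem map_map_rep (g g' : G) (p : Submodule ℂ V) :
    (p.map (π g')).map (π g) = p.map (π (g * g')) := by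
  rw [← Submodule.map_comp, ← Module.End.mul_eq_comp, ← map_mul]

theorem map_rep_one (p : Submodule ℂ V) : p.map (π 1) = p := by
  rw [map_one, Module.End.one_eq_id, Submodule.map_id]

theorem map_rep_mem {p : Submodule ℂ V} (hp : RepInvariant (RepRes H π) p) {h : G}
    (hh : h ∈ H) : p.map (π h) = p := by
  apply le_antisymm
  · rintro x ⟨y, hy, rfl⟩
    exact hp ⟨h, hh⟩ y hy
  · intro x hx
    have h2 : π h (π h⁻¹ x) = x := by
      rw [← Module.End.mul_apply, ← map_mul, mul_inv_cancel, map_one, Module.End.one_eq_id,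
        LinearMap.id_apply]
    exact ⟨π h⁻¹ x, hp ⟨h⁻¹, inv_mem hh⟩ x hx, h2⟩

theorem map_rep_eq_top_iff (g : G) {p : Submodule ℂ V} :
    p.map (π g) = ⊤ ↔ p = ⊤ := by
  constructor
  · intro h
    have h0 : (p.map (π g)).map (π g⁻¹) = p := by
      rw [map_map_rep, inv_mul_cancel, map_rep_one]
    rw [← h0, h, eq_top_iff]
    intro x _
    refine ⟨π g x, trivial, ?_⟩
    rw [← Module.End.mul_apply, ← map_mul, inv_mul_cancel, map_one, Module.End.one_eq_id,
      LinearMap.id_apply]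
  · rintro rfl
    rw [eq_top_iff]
    intro x _
    refine ⟨π g⁻¹ x, trivial, ?_⟩
    rw [← Module.End.mul_apply, ← map_mul, mul_inv_cancel, map_one, Module.End.one_eq_id,
      LinearMap.id_apply]

theorem invtToB_congr {K : Type*} [Group K] {W : Type*} [AddCommGroup W] [Module ℂ W]
    (ρ : Representation ℂ K W) {p p' : Submodule ℂ W} (h : p = p')
    (hp : RepInvariant ρ p) (hp' : RepInvariant ρ p') :
    invtToB ρ p hp = invtToB ρ p' hp' := by subst h; rfl

theorem invtToB_eq_top_iff {K : Type*} [Group K] {W : Type*} [AddCommGroup W] [Module ℂ W]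
    (ρ : Representation ℂ K W) {p : Submodule ℂ W} {hp : RepInvariant ρ p} :
    invtToB ρ p hp = ⊤ ↔ p = ⊤ := by
  rw [← bToInvt_eq_top_iff ρ (q := invtToB ρ p hp), bToInvt_invtToB]

theorem isCoatom_map_rep {p : Submodule ℂ V} (hp : RepInvariant (RepRes H π) p)
    (hcp : IsCoatom (invtToB (RepRes H π) p hp)) (g : G) :
    IsCoatom (invtToB (RepRes H π) (p.map (π g)) (map_repInvariant H π hp g)) := by
  set ρ := RepRes H π
  constructor
  · rw [Ne, invtToB_eq_top_iff, map_rep_eq_top_iff]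
    intro h
    exact hcp.1 ((invtToB_eq_top_iff ρ).mpr h)
  · intro x hx
    set y := invtToB ρ ((bToInvt ρ x).map (π g⁻¹))
      (map_repInvariant H π (bToInvt_invariant ρ x) g⁻¹) with hydef
    have hle : invtToB ρ p hp ≤ y := by
      have h1 : p.map (π g) ≤ bToInvt ρ x := hx.le
      have h2 : (p.map (π g)).map (π g⁻¹) ≤ (bToInvt ρ x).map (π g⁻¹) :=
        Submodule.map_mono h1
      rw [map_map_rep, inv_mul_cancel, map_rep_one] at h2
      exact h2
    have hne : invtToB ρ p hp ≠ y := by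
      intro h
      have h2 : p = (bToInvt ρ x).map (π g⁻¹) := by
        have := congrArg (bToInvt ρ) h
        rwa [bToInvt_invtToB, hydef, bToInvt_invtToB] at this
      have h3 : p.map (π g) = bToInvt ρ x := by
        rw [h2, map_map_rep, mul_inv_cancel, map_rep_one]
      apply hx.ne
      rw [invtToB_congr ρ h3 (map_repInvariant H π hp g) (bToInvt_invariant ρ x),
        invtToB_bToInvt]
    have hytop : y = ⊤ := hcp.2 y (lt_of_le_of_ne hle hne)
    rw [hydef, invtToB_eq_top_iff, map_rep_eq_top_iff] at hytop
    rw [← invtToB_bToInvt ρ x, invtToB_eq_top_iff]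
    exact hytop

theorem span_orbit_eq_top (hπ : RepIrreducible π) {v : V} (hv : v ≠ 0) :
    Submodule.span ℂ (Set.range fun g : G => π g v) = ⊤ := by
  have hinv : RepInvariant π (Submodule.span ℂ (Set.range fun g : G => π g v)) := by
    intro g w hw
    have hmap : Submodule.map (π g) (Submodule.span ℂ (Set.range fun g' : G => π g' v)) ≤
        Submodule.span ℂ (Set.range fun g' : G => π g' v) := by
      rw [Submodule.map_span]
      apply Submodule.span_mono
      rintro x ⟨x', ⟨g', rfl⟩, rfl⟩
      refine ⟨g * g', ?_⟩
      rw [← Module.End.mul_apply, ← map_mul]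
    exact hmap ⟨w, hw, rfl⟩
  rcases hπ.2 _ hinv with h | h
  · exfalso
    have hmem : π 1 v ∈ Submodule.span ℂ (Set.range fun g : G => π g v) :=
      Submodule.subset_span ⟨1, rfl⟩
    rw [h, Submodule.mem_bot, map_one, Module.End.one_eq_id, LinearMap.id_apply] at hmem
    exact hv hmem
  · exact h

theorem bToInvt_mono {K : Type*} [Group K] {W : Type*} [AddCommGroup W] [Module ℂ W]
    (ρ : Representation ℂ K W) {q q' : Submodule (MonoidAlgebra ℂ K) ρ.asModule}
    (h : q ≤ q') : bToInvt ρ q ≤ bToInvt ρ q' := fun _ hx => h hx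

theorem le_invtToB_iff {K : Type*} [Group K] {W : Type*} [AddCommGroup W] [Module ℂ W]
    (ρ : Representation ℂ K W) {q : Submodule (MonoidAlgebra ℂ K) ρ.asModule}
    {p : Submodule ℂ W} {hp : RepInvariant ρ p} :
    q ≤ invtToB ρ p hp ↔ bToInvt ρ q ≤ p := Iff.rfl

end MainAux

/-- If `H ⊴ G` has finite index and `π` is an irreducible complex representation of `G`,
then the restriction of `π` to `H` is a finite direct sum of irreducible representations. -/
theorem statement0 {G : Type} [Group G] (H : Subgroup G) [H.Normal]
    (hfin : Finite (G ⧸ H)) {V : Type} [AddCommGroup V] [Module ℂ V]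
    (π : Representation ℂ G V) (hπ : RepIrreducible π) :
    RepFiniteSemisimple (RepRes H π) := by
  classical
  haveI : Fintype (G ⧸ H) := Fintype.ofFinite _
  set ρ := RepRes H π with hρdef
  set B := MonoidAlgebra ℂ ↥H with hBdef
  haveI hV : Nontrivial V := hπ.1
  obtain ⟨v, hv⟩ := exists_ne (0 : V)
  -- finite generation of ρ.asModule over B
  have hspanB : Submodule.span B
      (Set.range fun q : G ⧸ H => (show ρ.asModule from π (Quotient.out q) v)) = ⊤ := by
    rw [← bToInvt_eq_top_iff ρ, eq_top_iff, ← span_orbit_eq_top π hπ hv, Submodule.span_le]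
    rintro x ⟨g, rfl⟩
    rw [SetLike.mem_coe, mem_bToInvt]
    set q : G ⧸ H := QuotientGroup.mk g with hqdef
    have hout : (QuotientGroup.mk (Quotient.out q) : G ⧸ H) = QuotientGroup.mk g := QuotientGroup.out_eq' q
    have hh : (Quotient.out q)⁻¹ * g ∈ H := QuotientGroup.eq.mp hout
    set h' : G := Quotient.out q * ((Quotient.out q)⁻¹ * g) * (Quotient.out q)⁻¹ with hh'def
    have hh' : h' ∈ H := Subgroup.Normal.conj_mem ‹H.Normal› _ hh (Quotient.out q)
    have hmem : (show ρ.asModule from π (Quotient.out q) v) ∈ Submodule.span B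
        (Set.range fun q : G ⧸ H => (show ρ.asModule from π (Quotient.out q) v)) :=
      Submodule.subset_span ⟨q, rfl⟩
    have hsm := Submodule.smul_mem _ (MonoidAlgebra.of ℂ ↥H ⟨h', hh'⟩) hmem
    rw [of_smul_asModule] at hsm
    have heq : ρ (⟨h', hh'⟩ : ↥H) (π (Quotient.out q) v) = π g v := by
      show π h' (π (Quotient.out q) v) = π g v
      rw [← Module.End.mul_apply, ← map_mul]
      congr 2
      rw [hh'def]
      group
    rwa [heq] at hsm
  -- coatomic
  haveI hcoatomic : IsCoatomic (Submodule B ρ.asModule) := by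
    apply CompleteLattice.coatomic_of_top_compact
    rw [← Submodule.fg_iff_compact]
    rw [Submodule.fg_def]
    exact ⟨_, Set.finite_range _, hspanB⟩
  haveI hntM : Nontrivial ρ.asModule := hV
  obtain ⟨m, hm, -⟩ := (eq_top_or_exists_le_coatom (⊥ : Submodule B ρ.asModule)).resolve_left
    bot_ne_top
  set p := bToInvt ρ m with hpdef
  have hp : RepInvariant ρ p := bToInvt_invariant ρ m
  have hmcoatom : IsCoatom (invtToB ρ p hp) := by
    have h0 : invtToB ρ p hp = m := invtToB_bToInvt ρ m
    rw [h0]; exact hm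
  -- the conjugate coatoms
  set mq : G ⧸ H → Submodule B ρ.asModule := fun q =>
    invtToB ρ (p.map (π (Quotient.out q))) (map_repInvariant H π hp (Quotient.out q))
    with hmqdef
  have hmqcoatom : ∀ q, IsCoatom (mq q) := fun q => isCoatom_map_rep H π hp hmcoatom _
  -- the intersection is trivial
  have hNbot : (⨅ q : G ⧸ H, p.map (π (Quotient.out q))) = ⊥ := by
    set N := ⨅ q : G ⧸ H, p.map (π (Quotient.out q)) with hNdef
    have hNinv : RepInvariant π N := by
      intro g w hw
      rw [hNdef, Submodule.mem_iInf]
      intro q'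
      set q : G ⧸ H := QuotientGroup.mk (g⁻¹ * Quotient.out q') with hqdef
      have hout : (QuotientGroup.mk (Quotient.out q) : G ⧸ H) =
          QuotientGroup.mk (g⁻¹ * Quotient.out q') := QuotientGroup.out_eq' q
      have hh : (g⁻¹ * Quotient.out q')⁻¹ * Quotient.out q ∈ H := QuotientGroup.eq.mp hout.symm
      have key : Quotient.out q' * ((g⁻¹ * Quotient.out q')⁻¹ * Quotient.out q) =
          g * Quotient.out q := by group
      have hw' : w ∈ p.map (π (Quotient.out q)) := (Submodule.mem_iInf _).mp hw q
      have hmm : π g w ∈ (p.map (π (Quotient.out q))).map (π g) := ⟨w, hw', rfl⟩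
      rw [map_map_rep, ← key, ← map_map_rep, map_rep_mem H π hp hh] at hmm
      exact hmm
    have hNlep : N ≤ p := by
      have h1 : Quotient.out ((1 : G) : G ⧸ H) ∈ H := by
        have := QuotientGroup.eq.mp (QuotientGroup.out_eq' ((1 : G) : G ⧸ H)).symm
        simpa using this
      have := iInf_le (fun q : G ⧸ H => p.map (π (Quotient.out q))) ((1 : G) : G ⧸ H)
      rwa [map_rep_mem H π hp h1] at this
    rcases hπ.2 N hNinv with h | h
    · exact h
    · exfalso
      apply hmcoatom.1
      rw [invtToB_eq_top_iff]
      rw [h] at hNlep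
      exact top_le_iff.mp hNlep
  have hiInfmq : (⨅ q : G ⧸ H, mq q) = ⊥ := by
    ext x
    rw [Submodule.mem_iInf, Submodule.mem_bot]
    constructor
    · intro hx
      have : (@id V x) ∈ (⨅ q : G ⧸ H, p.map (π (Quotient.out q))) := by
        rw [Submodule.mem_iInf]
        exact fun q => hx q
      rw [hNbot, Submodule.mem_bot] at this
      exact this
    · rintro rfl
      exact fun q => Submodule.zero_mem _
  -- quotients are simple
  have hsimp : ∀ q : G ⧸ H, IsSimpleModule B (ρ.asModule ⧸ mq q) := fun q =>
    isSimpleModule_iff_isCoatom.mpr (hmqcoatom q)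
  haveI : ∀ q : G ⧸ H, IsNoetherian B (ρ.asModule ⧸ mq q) := fun q =>
    (noeth_art_of_simple (hsimp q)).1
  haveI : ∀ q : G ⧸ H, IsSemisimpleModule B (ρ.asModule ⧸ mq q) := fun q =>
    isSemisimpleModule_of_isSimpleModule (hsimp q)
  set f : ρ.asModule →ₗ[B] ∀ q : G ⧸ H, ρ.asModule ⧸ mq q :=
    LinearMap.pi fun q => (mq q).mkQ with hfdef
  have hfinj : Function.Injective f := by
    rw [← LinearMap.ker_eq_bot, hfdef, LinearMap.ker_pi]
    simpa [Submodule.ker_mkQ] using hiInfmq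
  haveI : IsSemisimpleModule B (∀ q : G ⧸ H, ρ.asModule ⧸ mq q) := isSemisimpleModule_pi
  haveI : IsSemisimpleModule B ρ.asModule :=
    IsSemisimpleModule.congr (M := ↥(LinearMap.range f)) (LinearEquiv.ofInjective f hfinj)
  haveI : IsNoetherian B (∀ q : G ⧸ H, ρ.asModule ⧸ mq q) := isNoetherian_pi
  haveI : IsNoetherian B ρ.asModule := isNoetherian_of_injective f hfinj
  -- semisimple decomposition
  obtain ⟨s, hsfin, hsind, hstop, hssimp⟩ :=
    ((IsSemisimpleModule.finite_tfae (R := B) (M := ρ.asModule)).out 1 4).mp ‹_›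
  haveI := hsfin.fintype
  set e : Fin (Fintype.card s) ≃ s := (Fintype.equivFin s).symm with hedef
  refine ⟨Fintype.card s, fun i => bToInvt ρ (e i : Submodule B ρ.asModule),
    fun i => bToInvt_invariant ρ _, fun i => repIrreducible_of_isSimple ρ _
      (hssimp _ (e i).2), ?_⟩
  rw [DirectSum.isInternal_submodule_iff_iSupIndep_and_iSup_eq_top]
  have hBind : iSupIndep (fun i : Fin (Fintype.card s) => (e i : Submodule B ρ.asModule)) :=
    ((sSupIndep_iff s).mp hsind).comp e.injective
  constructor
  · intro i
    have hdisj := hBind i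
    refine Submodule.disjoint_def.mpr fun x hx1 hx2 => ?_
    have hle : (⨆ j, ⨆ (_ : j ≠ i), bToInvt ρ (e j : Submodule B ρ.asModule)) ≤
        bToInvt ρ (⨆ j, ⨆ (_ : j ≠ i), (e j : Submodule B ρ.asModule)) := by
      refine iSup_le fun j => iSup_le fun hj => ?_
      exact bToInvt_mono ρ (le_iSup_of_le j (le_iSup_of_le hj le_rfl))
    have hx2' : (x : ρ.asModule) ∈ (⨆ j, ⨆ (_ : j ≠ i), (e j : Submodule B ρ.asModule)) :=
      hle hx2
    exact Submodule.disjoint_def.mp hdisj x hx1 hx2'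
  · set Wsup := ⨆ i, bToInvt ρ (e i : Submodule B ρ.asModule) with hWdef
    have hWinv : RepInvariant ρ Wsup := repInvariant_iSup ρ _ fun i => bToInvt_invariant ρ _
    rw [← invtToB_eq_top_iff ρ (hp := hWinv), eq_top_iff, ← hstop, sSup_eq_iSup']
    refine iSup_le fun x => ?_
    rw [le_invtToB_iff]
    have : bToInvt ρ (e (e.symm x) : Submodule B ρ.asModule) ≤ Wsup := by
      rw [hWdef]
      exact le_iSup (fun i => bToInvt ρ (e i : Submodule B ρ.asModule)) (e.symm x)
    rwa [e.apply_symm_apply] at this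
end

section
/- Let G be a group and H a normal subgroup with G/H finite. If π is an irreducible representation of G and ρ an irreducible subrepresentation of Res^G_H π, then the irreducible constituents of Res^G_H π are exactly the G-conjugates ρ^g of ρ, up to isomorphism. -/
/-- If `H ⊴ G` has finite index, `π` is an irreducible representation of `G` and `ρ`
an irreducible subrepresentation of `Res_H π`, then the irreducible constituents of
`Res_H π` are exactly the `G`-conjugates `ρ^g` of `ρ`, up to isomorphism. -/
theorem statement2 {G : Type} [Group G] (H : Subgroup G) [H.Normal]
    (hfin : Finite (G ⧸ H)) {V : Type} [AddCommGroup V] [Module ℂ V]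
    (π : Representation ℂ G V) (hπ : RepIrreducible π)
    {W : Type} [AddCommGroup W] [Module ℂ W]
    (ρ : Representation ℂ ↥H W) (hρ : RepIrreducible ρ)
    (hcont : RepContains (RepRes H π) ρ) :
    (∀ (W' : ModuleCat ℂ) (σ : Representation ℂ ↥H W'),
        RepIrreducible σ → RepContains (RepRes H π) σ → ∃ g : G, RepIso σ (RepConj ρ g)) ∧
    (∀ g : G, RepContains (RepRes H π) (RepConj ρ g)) := by

  classical
  obtain ⟨j, hjinj, hjcomm⟩ := hcont
  have hjcomm' : ∀ (h : ↥H) (w : W), j (ρ h w) = π ↑h (j w) := hjcomm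
  -- composition law
  have hcomp : ∀ (a b : G) (v : V), π a (π b v) = π (a * b) v := by
    intro a b v; rw [map_mul]; rfl
  set N : G → Submodule ℂ V := fun g => (LinearMap.range j).map (π g) with hN
  have hmul : ∀ (a b : G), π (a * b) = (π a) ∘ₗ (π b) := by
    intro a b; rw [map_mul]; rfl
  -- range j is stable under H
  have hrangeH : ∀ h : ↥H, (LinearMap.range j).map (π ↑h) = LinearMap.range j := by
    intro h
    apply le_antisymm
    · rintro _ ⟨_, ⟨w, rfl⟩, rfl⟩
      exact ⟨ρ h w, hjcomm' h w⟩
    · rintro _ ⟨w, rfl⟩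
      refine ⟨j (ρ h⁻¹ w), ⟨ρ h⁻¹ w, rfl⟩, ?_⟩
      rw [← hjcomm' h (ρ h⁻¹ w), ← Module.End.mul_apply, ← map_mul, mul_inv_cancel, map_one,
        Module.End.one_apply]
  have hNmul : ∀ (x g : G), (N g).map (π x) = N (x * g) := by
    intro x g
    simp only [hN, ← Submodule.map_comp, ← hmul]
  have hNH : ∀ (g : G) (h : ↥H), N (g * ↑h) = N g := by
    intro g h
    show (LinearMap.range j).map (π (g * ↑h)) = _
    rw [hmul, Submodule.map_comp, hrangeH]
  have hHnormal : H.Normal := inferInstance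
  have hNinv : ∀ (g : G) (h : ↥H) (v : V), v ∈ N g → π ↑h v ∈ N g := by
    intro g h v hv
    have h1 : π ↑h v ∈ (N g).map (π ↑h) := Submodule.mem_map_of_mem hv
    rw [hNmul] at h1
    have h2 : (↑h : G) * g = g * ↑(⟨g⁻¹ * ↑h * g, by
        simpa using hHnormal.conj_mem _ h.2 g⁻¹⟩ : ↥H) := by
      group
    rwa [h2, hNH] at h1
  -- nontrivial witness in W
  obtain ⟨wa, wb, hwab⟩ := hρ.1
  have hw0 : wa - wb ≠ 0 := sub_ne_zero.mpr hwab
  have hjw0 : j (wa - wb) ≠ 0 := by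
    intro h; exact hw0 (hjinj (by simpa using h))
  -- the supremum of all N g is all of V
  have hsup : (⨆ g : G, N g) = ⊤ := by
    refine (hπ.2 _ ?_).resolve_left ?_
    · intro x v hv
      have h1 : π x v ∈ (⨆ g, N g).map (π x) := Submodule.mem_map_of_mem hv
      rw [Submodule.map_iSup] at h1
      exact (iSup_le fun g => (hNmul x g).le.trans (le_iSup N (x * g))) h1
    · intro hbot
      have h1 : j (wa - wb) ∈ N 1 :=
        ⟨j (wa - wb), ⟨wa - wb, rfl⟩, by rw [map_one, Module.End.one_apply]⟩
      have h2 : j (wa - wb) ∈ (⨆ g, N g) := le_iSup N 1 h1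
      rw [hbot, Submodule.mem_bot] at h2
      exact hjw0 h2
  have : Fintype (G ⧸ H) := Fintype.ofFinite _
  set f : G ⧸ H → Submodule ℂ V := fun q => N q.out with hf
  have htop2 : (Finset.univ : Finset (G ⧸ H)).sup f = ⊤ := by
    refine le_antisymm le_top ?_
    rw [← hsup]
    refine iSup_le fun g => ?_
    obtain ⟨h, hh⟩ := QuotientGroup.mk_out_eq_mul H g
    have : f (↑g : G ⧸ H) = N g := by rw [hf]; simp only; rw [hh, hNH]
    rw [← this]
    exact Finset.le_sup (Finset.mem_univ _)
  -- invariance of finset sups of the family f under H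
  have hFinv : ∀ s : Finset (G ⧸ H), ∀ (h : ↥H) (v : V), v ∈ s.sup f → π ↑h v ∈ s.sup f := by
    intro s
    induction s using Finset.induction with
    | empty =>
      intro h v hv
      simp only [Finset.sup_empty, Submodule.mem_bot] at hv ⊢
      rw [hv, map_zero]
    | insert _ _ hni ih =>
      intro h v hv
      rw [Finset.sup_insert] at hv ⊢
      obtain ⟨a, ha, b, hb, rfl⟩ := Submodule.mem_sup.mp hv
      exact Submodule.mem_sup.mpr
        ⟨π ↑h a, hNinv _ h a ha, π ↑h b, ih h b hb, (map_add _ a b).symm⟩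
  constructor
  · -- main direction
    intro W' σ hσ hcσ
    obtain ⟨k, hkinj, hkcomm⟩ := hcσ
    have hkcomm' : ∀ (h : ↥H) (w : W'), k (σ h w) = π ↑h (k w) := hkcomm
    set X : Submodule ℂ V := LinearMap.range k with hX
    obtain ⟨wa', wb', hwab'⟩ := hσ.1
    have hw0' : wa' - wb' ≠ 0 := sub_ne_zero.mpr hwab'
    -- minimal finset s with X ≤ s.sup f
    set S : Finset (Finset (G ⧸ H)) :=
      Finset.univ.powerset.filter (fun s => X ≤ s.sup f) with hS
    have hSuniv : (Finset.univ : Finset (G ⧸ H)) ∈ S := by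
      rw [hS, Finset.mem_filter]
      exact ⟨Finset.mem_powerset.mpr (Finset.subset_univ _), by rw [htop2]; exact le_top⟩
    obtain ⟨s, hsS, hsmin⟩ := Finset.exists_min_image S Finset.card ⟨_, hSuniv⟩
    have hXs : X ≤ s.sup f := (Finset.mem_filter.mp hsS).2
    have hsne : s.Nonempty := by
      rcases Finset.eq_empty_or_nonempty s with rfl | h
      · exfalso
        have : k (wa' - wb') ∈ X := ⟨wa' - wb', rfl⟩
        have h2 := hXs this
        simp only [Finset.sup_empty, Submodule.mem_bot] at h2
        exact hw0' (hkinj (by simpa using h2))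
      · exact h
    obtain ⟨i, hi⟩ := hsne
    set g₀ : G := i.out with hg₀
    set R : Submodule ℂ V := (s.erase i).sup f with hR
    have hRinv : ∀ (h : ↥H) (v : V), v ∈ R → π ↑h v ∈ R := hFinv (s.erase i)
    have hiR : s.sup f = f i ⊔ R := by
      conv_lhs => rw [← Finset.insert_erase hi]
      rw [Finset.sup_insert]
    have hXnR : ¬ X ≤ R := by
      intro hle
      have hmem : s.erase i ∈ S := by
        rw [hS, Finset.mem_filter]
        exact ⟨Finset.mem_powerset.mpr (Finset.subset_univ _), hle⟩
      have h1 := hsmin _ hmem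
      have h2 := Finset.card_erase_lt_of_mem hi
      omega
    -- elements of f i = N g₀
    have hfi : f i = (LinearMap.range j).map (π g₀) := rfl
    -- dichotomy for ρ on comap (π g₀ ∘ j) R
    have hρR : ∀ w : W, π g₀ (j w) ∈ R → w = 0 := by
      have hinv : RepInvariant ρ (Submodule.comap ((π g₀) ∘ₗ j) R) := by
        intro h w hw
        simp only [Submodule.mem_comap, LinearMap.coe_comp, Function.comp_apply] at hw ⊢
        rw [hjcomm' h w, hcomp]
        have harr : g₀ * ↑h = (↑(⟨g₀ * ↑h * g₀⁻¹, hHnormal.conj_mem _ h.2 g₀⟩ : ↥H) : G) * g₀ := by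
          group
        rw [harr, ← hcomp]
        exact hRinv _ _ hw
      rcases hρ.2 _ hinv with hbot | htopc
      · intro w hw
        have : w ∈ (⊥ : Submodule ℂ W) := hbot ▸ (Submodule.mem_comap.mpr (by simpa using hw))
        simpa using this
      · exfalso
        apply hXnR
        have hfile : f i ≤ R := by
          rintro _ ⟨_, ⟨w, rfl⟩, rfl⟩
          have : w ∈ Submodule.comap ((π g₀) ∘ₗ j) R := htopc ▸ Submodule.mem_top
          simpa using this
        calc X ≤ s.sup f := hXs
        _ = f i ⊔ R := hiR
        _ ≤ R := sup_le hfile le_rfl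
    -- dichotomy for σ on comap k R
    have hσR : ∀ w : W', k w ∈ R → w = 0 := by
      have hinv : RepInvariant σ (Submodule.comap k R) := by
        intro h w hw
        simp only [Submodule.mem_comap] at hw ⊢
        rw [hkcomm' h w]
        exact hRinv _ _ hw
      rcases hσ.2 _ hinv with hbot | htopc
      · intro w hw
        have : w ∈ (⊥ : Submodule ℂ W') := hbot ▸ (Submodule.mem_comap.mpr hw)
        simpa using this
      · exfalso
        apply hXnR
        rintro _ ⟨w, rfl⟩
        have : w ∈ Submodule.comap k R := htopc ▸ Submodule.mem_top
        simpa using this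
    -- set up the quotient map
    set q : V →ₗ[ℂ] V ⧸ R := R.mkQ with hq
    set F1 : W' →ₗ[ℂ] V ⧸ R := q ∘ₗ k with hF1
    set F2 : W →ₗ[ℂ] V ⧸ R := q ∘ₗ ((π g₀) ∘ₗ j) with hF2
    have hF2app : ∀ w, F2 w = Submodule.Quotient.mk (π g₀ (j w)) := fun w => rfl
    have hF1app : ∀ w', F1 w' = Submodule.Quotient.mk (k w') := fun w' => rfl
    have hF2inj : Function.Injective F2 := by
      have h0 : ∀ w, F2 w = 0 → w = 0 := by
        intro w hw
        rw [hF2app, Submodule.Quotient.mk_eq_zero] at hw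
        exact hρR w hw
      intro a b hab
      have := h0 (a - b) (by rw [map_sub, hab, sub_self])
      exact sub_eq_zero.mp this
    have hXfiR : X ≤ f i ⊔ R := hiR ▸ hXs
    have hrange : ∀ w', ∃ w, F2 w = F1 w' := by
      intro w'
      obtain ⟨a, ha, b, hb, heq⟩ := Submodule.mem_sup.mp (hXfiR ⟨w', rfl⟩)
      obtain ⟨_, ⟨w, rfl⟩, rfl⟩ := ha
      refine ⟨w, ?_⟩
      rw [hF2app, hF1app, ← heq]
      have : Submodule.Quotient.mk (p := R) b = 0 := (Submodule.Quotient.mk_eq_zero R).mpr hb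
      rw [Submodule.Quotient.mk_add, this, add_zero]
    have hrange' : ∀ w', F1 w' ∈ LinearMap.range F2 := by
      intro w'; obtain ⟨w, hw⟩ := hrange w'; exact ⟨w, hw⟩
    set e : W ≃ₗ[ℂ] LinearMap.range F2 := LinearEquiv.ofInjective F2 hF2inj with he
    set ψ : W' →ₗ[ℂ] W :=
      e.symm.toLinearMap ∘ₗ (F1.codRestrict (LinearMap.range F2) hrange') with hψ
    have hspec : ∀ w', F2 (ψ w') = F1 w' := by
      intro w'
      have h1 : e (ψ w') = ⟨F1 w', hrange' w'⟩ := by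
        rw [hψ]
        exact e.apply_symm_apply _
      have h2 : (e (ψ w') : V ⧸ R) = F2 (ψ w') := by
        rw [he]; rfl
      rw [← h2, h1]
    -- key: q is H-compatible on equal classes
    have hqH : ∀ (h : ↥H) (v v' : V), q v = q v' → q (π ↑h v) = q (π ↑h v') := by
      intro h v v' hvv
      have h1 : v - v' ∈ R := by
        rwa [hq, Submodule.mkQ_apply, Submodule.mkQ_apply, Submodule.Quotient.eq] at hvv
      have h2 : π ↑h (v - v') ∈ R := hRinv h _ h1
      rw [map_sub] at h2
      rw [hq, Submodule.mkQ_apply, Submodule.mkQ_apply]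
      exact (Submodule.Quotient.eq R).mpr h2
    -- equivariance
    have hequi : ∀ (h : ↥H) (w' : W'), ψ (σ h w') = (RepConj ρ g₀⁻¹) h (ψ w') := by
      intro h w'
      apply hF2inj
      rw [hspec]
      have hL : F1 (σ h w') = q (π ↑h (k w')) := by
        rw [hF1app, hkcomm' h w', hq, Submodule.mkQ_apply]
      have hhh : ((conjHom H g₀⁻¹) h : G) = g₀⁻¹ * ↑h * g₀⁻¹⁻¹ := rfl
      have hRC : (RepConj ρ g₀⁻¹) h (ψ w') = ρ ((conjHom H g₀⁻¹) h) (ψ w') := rfl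
      rw [hL, hRC, hF2app]
      rw [hjcomm' ((conjHom H g₀⁻¹) h) (ψ w'), hcomp, hhh]
      have hgg : g₀ * (g₀⁻¹ * ↑h * g₀⁻¹⁻¹) = ↑h * g₀ := by group
      rw [hgg, ← hcomp, ← Submodule.mkQ_apply, ← hq]
      have hkey : q (π g₀ (j (ψ w'))) = q (k w') := by
        have := hspec w'
        rw [hF2app, hF1app] at this
        rw [hq, Submodule.mkQ_apply, Submodule.mkQ_apply]
        exact this
      exact hqH h _ _ hkey.symm
    -- injectivity of ψ
    have hψinj : Function.Injective ψ := by
      have h0 : ∀ w', ψ w' = 0 → w' = 0 := by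
        intro w' hw
        have h1 : F2 (ψ w') = 0 := by rw [hw, map_zero]
        rw [hspec, hF1app, Submodule.Quotient.mk_eq_zero] at h1
        exact hσR w' h1
      intro a b hab
      exact sub_eq_zero.mp (h0 (a - b) (by rw [map_sub, hab, sub_self]))
    -- surjectivity of ψ
    have hψsurj : Function.Surjective ψ := by
      have hinv : RepInvariant ρ (LinearMap.range ψ) := by
        rintro h _ ⟨w', rfl⟩
        set h' : ↥H := (conjHom H g₀) h with hh'
        have hid : (conjHom H g₀⁻¹) h' = h := by
          ext
          show g₀⁻¹ * (g₀ * ↑h * g₀⁻¹) * g₀⁻¹⁻¹ = ↑h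
          group
        have h5 := hequi h' w'
        have h6 : (RepConj ρ g₀⁻¹) h' (ψ w') = ρ h (ψ w') := by
          rw [show (RepConj ρ g₀⁻¹) h' = ρ ((conjHom H g₀⁻¹) h') from rfl, hid]
        exact ⟨σ h' w', h5.trans h6⟩
      rcases hρ.2 _ hinv with hbot | htopc
      · exfalso
        have h1 : ψ (wa' - wb') ∈ (⊥ : Submodule ℂ W) := hbot ▸ ⟨wa' - wb', rfl⟩
        rw [Submodule.mem_bot] at h1
        exact hw0' (hψinj (by simpa using h1))
      · intro w
        have : w ∈ LinearMap.range ψ := htopc ▸ Submodule.mem_top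
        exact this
    refine ⟨g₀⁻¹, LinearEquiv.ofBijective ψ ⟨hψinj, hψsurj⟩, ?_⟩
    intro h w'
    exact hequi h w'
  · -- every conjugate appears
    intro g
    refine ⟨(π g⁻¹) ∘ₗ j, ?_, ?_⟩
    · intro a b hab
      simp only [LinearMap.coe_comp, Function.comp_apply] at hab
      have := congrArg (π g) hab
      rw [hcomp, hcomp, mul_inv_cancel, map_one, Module.End.one_apply, Module.End.one_apply] at this
      exact hjinj this
    · intro h w
      simp only [LinearMap.coe_comp, Function.comp_apply]
      have h1 : (RepConj ρ g) h w = ρ ((conjHom H g) h) w := rfl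
      have h2 : ((conjHom H g) h : G) = g * ↑h * g⁻¹ := rfl
      rw [h1, hjcomm' ((conjHom H g) h) w, h2, hcomp]
      have h3 : g⁻¹ * (g * ↑h * g⁻¹) = ↑h * g⁻¹ := by group
      rw [h3]
      have h4 : RepRes H π h (π g⁻¹ (j w)) = π ↑h (π g⁻¹ (j w)) := rfl
      rw [h4, hcomp]
end

section
/- Let G be a group and H a normal subgroup with G/H cyclic of prime order p. Let ρ be an irreducible representation of H satisfying Schur's lemma, with ρ^g ≅ ρ for a generator g of G/H. Then ρ extends to an irreducible representation π of G, and Ind^G_H ρ ≅ ⊕_{i=1}^{p} (π ⊗ ω_i), where ω_1,…,ω_p are the p distinct characters of G/H, and the representations π ⊗ ω_i are pairwise non-isomorphic. -/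
open Finset in
private lemma vand_inj {p : ℕ} {W : Type} [AddCommGroup W] [Module ℂ W] (c : Fin p → ℂ)
    (hc : Function.Injective c) (v : Fin p → W)
    (hv : ∀ k : Fin p, ∑ i, c i ^ (k : ℕ) • v i = 0) : v = 0 := by
  classical
  set M : Matrix (Fin p) (Fin p) ℂ := (Matrix.vandermonde c).transpose with hM
  have hdet : IsUnit M.det := by
    rw [Matrix.det_transpose]
    exact (Matrix.det_vandermonde_ne_zero_iff.mpr hc).isUnit
  funext j
  have h1 : ∀ i, (M⁻¹ * M) j i = (1 : Matrix (Fin p) (Fin p) ℂ) j i := by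
    rw [Matrix.nonsing_inv_mul M hdet]; intro i; rfl
  have : v j = ∑ i, ((M⁻¹ * M) j i) • v i := by
    simp only [h1, Matrix.one_apply]
    rw [Finset.sum_eq_single j] <;> simp +contextual [eq_comm]
  rw [this]
  simp only [Matrix.mul_apply, Finset.sum_smul]
  rw [Finset.sum_comm]
  have : ∀ k, ∑ i, (M⁻¹ j k * M k i) • v i = 0 := by
    intro k
    have h2 : ∑ i, (M⁻¹ j k * M k i) • v i = M⁻¹ j k • ∑ i, M k i • v i := by
      rw [Finset.smul_sum]; simp [smul_smul]
    rw [h2]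
    have h3 : ∑ i, M k i • v i = 0 := by
      simpa [hM, Matrix.transpose_apply, Matrix.vandermonde] using hv k
    simp [h3]
  simp [this]

open Finset in
private lemma vand_surj {p : ℕ} {W : Type} [AddCommGroup W] [Module ℂ W] (c : Fin p → ℂ)
    (hc : Function.Injective c) (b : Fin p → W) :
    ∃ v : Fin p → W, ∀ k : Fin p, ∑ i, c i ^ (k : ℕ) • v i = b k := by
  classical
  set M : Matrix (Fin p) (Fin p) ℂ := (Matrix.vandermonde c).transpose with hM
  have hdet : IsUnit M.det := by
    rw [Matrix.det_transpose]
    exact (Matrix.det_vandermonde_ne_zero_iff.mpr hc).isUnit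
  set v : Fin p → W := fun i => ∑ l, M⁻¹ i l • b l with hv
  refine ⟨v, fun k => ?_⟩
  have key : ∀ l, (M * M⁻¹) k l = (1 : Matrix (Fin p) (Fin p) ℂ) k l := by
    rw [Matrix.mul_nonsing_inv M hdet]; intro l; rfl
  have hMk : ∀ i, c i ^ (k : ℕ) = M k i := by
    intro i; simp [hM, Matrix.transpose_apply, Matrix.vandermonde]
  calc ∑ i, c i ^ (k : ℕ) • v i = ∑ i, ∑ l, (M k i * M⁻¹ i l) • b l := by
        refine Finset.sum_congr rfl fun i _ => ?_
        rw [hMk i, hv]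
        rw [Finset.smul_sum]
        exact Finset.sum_congr rfl fun l _ => smul_smul _ _ _
    _ = ∑ l, ((M * M⁻¹) k l) • b l := by
        rw [Finset.sum_comm]
        refine Finset.sum_congr rfl fun l _ => ?_
        rw [Matrix.mul_apply, Finset.sum_smul]
    _ = b k := by
        simp only [key, Matrix.one_apply]
        rw [Finset.sum_eq_single k] <;> simp +contextual [eq_comm]


section PhiSec

variable {G : Type} [Group G] {W : Type} [AddCommGroup W] [Module ℂ W]

private def PhiFun (H : Subgroup G) (π : Representation ℂ G W) {p : ℕ}
    (ω : Fin p → (G →* ℂˣ)) (v : Fin p → W) : G → W :=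
  fun y => ∑ i, ((ω i y⁻¹ : ℂˣ) : ℂ) • π y⁻¹ (v i)

private lemma PhiFun_mem (H : Subgroup G) (ρ : Representation ℂ ↥H W)
    (π : Representation ℂ G W) {p : ℕ} (ω : Fin p → (G →* ℂˣ))
    (hπ1 : ∀ h : ↥H, π (h : G) = ρ h) (hω1 : ∀ i, ∀ h ∈ H, (ω i) h = 1)
    (v : Fin p → W) : PhiFun H π ω v ∈ IndSpace H ρ := by
  intro g0 h
  show ∑ i, ((ω i (g0 * (h : G))⁻¹ : ℂˣ) : ℂ) • π (g0 * (h : G))⁻¹ (v i)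
      = ρ h⁻¹ (∑ i, ((ω i g0⁻¹ : ℂˣ) : ℂ) • π g0⁻¹ (v i))
  rw [map_sum]
  refine Finset.sum_congr rfl fun i _ => ?_
  rw [map_smul]
  have hinv : (g0 * (h : G))⁻¹ = ((h⁻¹ : ↥H) : G) * g0⁻¹ := by
    simp [mul_inv_rev]
  have hcω : ω i (g0 * (h : G))⁻¹ = ω i g0⁻¹ := by
    rw [hinv, map_mul, hω1 i _ (h⁻¹).2, one_mul]
  have hcπ : π (g0 * (h : G))⁻¹ (v i) = ρ h⁻¹ (π g0⁻¹ (v i)) := by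
    rw [hinv, map_mul, Module.End.mul_apply, hπ1]
  rw [hcω, hcπ]

private def PhiMap (H : Subgroup G) (ρ : Representation ℂ ↥H W)
    (π : Representation ℂ G W) {p : ℕ} (ω : Fin p → (G →* ℂˣ))
    (hπ1 : ∀ h : ↥H, π (h : G) = ρ h) (hω1 : ∀ i, ∀ h ∈ H, (ω i) h = 1) :
    (Fin p → W) →ₗ[ℂ] ↥(IndSpace H ρ) where
  toFun v := ⟨PhiFun H π ω v, PhiFun_mem H ρ π ω hπ1 hω1 v⟩
  map_add' a b := by
    apply Subtype.ext
    funext y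
    show ∑ i, ((ω i y⁻¹ : ℂˣ) : ℂ) • π y⁻¹ ((a + b) i)
        = (∑ i, ((ω i y⁻¹ : ℂˣ) : ℂ) • π y⁻¹ (a i))
          + ∑ i, ((ω i y⁻¹ : ℂˣ) : ℂ) • π y⁻¹ (b i)
    rw [← Finset.sum_add_distrib]
    refine Finset.sum_congr rfl fun i _ => ?_
    rw [Pi.add_apply, map_add, smul_add]
  map_smul' m a := by
    apply Subtype.ext
    funext y
    show ∑ i, ((ω i y⁻¹ : ℂˣ) : ℂ) • π y⁻¹ ((m • a) i)
        = m • ∑ i, ((ω i y⁻¹ : ℂˣ) : ℂ) • π y⁻¹ (a i)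
    rw [Finset.smul_sum]
    refine Finset.sum_congr rfl fun i _ => ?_
    rw [Pi.smul_apply, map_smul, smul_smul, smul_smul, mul_comm]

private lemma PhiMap_val (H : Subgroup G) (ρ : Representation ℂ ↥H W)
    (π : Representation ℂ G W) {p : ℕ} (ω : Fin p → (G →* ℂˣ))
    (hπ1 : ∀ h : ↥H, π (h : G) = ρ h) (hω1 : ∀ i, ∀ h ∈ H, (ω i) h = 1)
    (v : Fin p → W) (y : G) :
    ((PhiMap H ρ π ω hπ1 hω1 v : ↥(IndSpace H ρ)) : G → W) y
      = ∑ i, ((ω i y⁻¹ : ℂˣ) : ℂ) • π y⁻¹ (v i) := rfl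

end PhiSec

set_option maxHeartbeats 4000000 in
/-- If `G/H` is cyclic of prime order `p` generated by the image of `g`, and `ρ` is an
irreducible representation of `H` satisfying Schur's lemma with `ρ^g ≅ ρ`, then `ρ` extends
to an irreducible representation `π` of `G` and
`Ind_H^G ρ ≅ ⊕_{i=1}^p (π ⊗ ω_i)` where `ω_1, …, ω_p` are the `p` distinct characters of
`G/H`, the twists `π ⊗ ω_i` being pairwise non-isomorphic. -/
theorem statement3 {G : Type} [Group G] (H : Subgroup G) [H.Normal]
    (p : ℕ) (hp : p.Prime) (hcard : Nat.card (G ⧸ H) = p)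
    (g : G) (hgen : ∀ x : G ⧸ H, x ∈ Subgroup.zpowers ((g : G ⧸ H)))
    {W : Type} [AddCommGroup W] [Module ℂ W]
    (ρ : Representation ℂ ↥H W) (hρ : RepIrreducible ρ) (hschur : RepSchur ρ)
    (hconj : RepIso (RepConj ρ g) ρ) :
    ∃ π : Representation ℂ G W,
      π.comp H.subtype = ρ ∧ RepIrreducible π ∧
      ∀ ω : Fin p → (G →* ℂˣ),
        (∀ i, ∀ h ∈ H, ω i h = 1) → Function.Injective ω →
          RepIso (IndRep H ρ) (PiRep fun i => TwistRep π (ω i)) ∧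
          ∀ i j, i ≠ j → ¬ RepIso (TwistRep π (ω i)) (TwistRep π (ω j)) := by
  classical
  have hW : Nontrivial W := hρ.1
  have hpos : 0 < p := hp.pos
  -- basic quotient group facts
  have hfinq : Finite (G ⧸ H) := ((Nat.card_pos_iff).mp (hcard ▸ hp.pos)).2
  have hgpH : g ^ p ∈ H := by
    rw [← QuotientGroup.eq_one_iff]
    have : ((g ^ p : G) : G ⧸ H) = ((g : G ⧸ H)) ^ p := by push_cast; rfl
    rw [this, ← hcard]
    exact pow_card_eq_one'
  have hne1 : (g : G ⧸ H) ≠ 1 := by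
    intro h1
    have hall : ∀ x : G ⧸ H, x = 1 := by
      intro x
      obtain ⟨k, hk⟩ := hgen x
      rw [← hk]; simp [h1]
    have : Nat.card (G ⧸ H) = 1 :=
      Nat.card_eq_one_iff_unique.mpr ⟨⟨fun a b => by rw [hall a, hall b]⟩, ⟨1⟩⟩
    rw [hcard] at this
    exact hp.one_lt.ne' this
  have hord : orderOf (g : G ⧸ H) = p := by
    have hdvd := orderOf_dvd_natCard (g : G ⧸ H)
    rw [hcard] at hdvd
    rcases (Nat.Prime.eq_one_or_self_of_dvd hp _ hdvd) with h | h
    · exact absurd (orderOf_eq_one_iff.mp h) hne1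
    · exact h
  have hdiv : ∀ n : ℤ, g ^ n ∈ H → (p : ℤ) ∣ n := by
    intro n hn
    have h1 : ((g : G ⧸ H)) ^ n = 1 := by
      have : ((g ^ n : G) : G ⧸ H) = ((g : G ⧸ H)) ^ n := by push_cast; rfl
      rw [← this, QuotientGroup.eq_one_iff]; exact hn
    have := orderOf_dvd_iff_zpow_eq_one.mpr h1
    rwa [hord] at this
  have hex : ∀ x : G, ∃ k : ℤ, (g ^ k)⁻¹ * x ∈ H := by
    intro x
    obtain ⟨k, hk⟩ := hgen (x : G ⧸ H)
    refine ⟨k, ?_⟩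
    rw [← QuotientGroup.eq]
    rw [← hk]; push_cast; rfl
  choose kk hkk using hex
  -- the representation as a homomorphism into units
  let R : ↥H →* (W →ₗ[ℂ] W)ˣ :=
    { toFun := fun h => ⟨ρ h, ρ h⁻¹,
        by rw [← map_mul, mul_inv_cancel, map_one],
        by rw [← map_mul, inv_mul_cancel, map_one]⟩
      map_one' := by ext v; simp
      map_mul' := fun a b => by ext v; simp }
  have hRval : ∀ h : ↥H, ((R h : (W →ₗ[ℂ] W)ˣ) : W →ₗ[ℂ] W) = ρ h := fun h => rfl
  -- the intertwiner as a unit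
  obtain ⟨e, he⟩ := hconj
  let U0 : (W →ₗ[ℂ] W)ˣ :=
    ⟨e.symm.toLinearMap, e.toLinearMap, by ext v; simp, by ext v; simp⟩
  have hU0 : ∀ (h : ↥H) (u : W), e.symm (ρ h u) = ρ (conjHom H g h) (e.symm u) := by
    intro h u
    have := he h (e.symm u)
    rw [LinearEquiv.apply_symm_apply] at this
    rw [← this, LinearEquiv.symm_apply_apply]
    rfl
  have hU0' : ∀ h : ↥H, U0 * R h = R (conjHom H g h) * U0 := by
    intro h
    ext v
    exact hU0 h v
  -- powers conjugate
  have hmemconj : ∀ (a : G) (h : ↥H), a * (h : G) * a⁻¹ ∈ H :=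
    fun a h => Subgroup.Normal.conj_mem ‹H.Normal› _ h.2 _
  have conj_pow : ∀ (U : (W →ₗ[ℂ] W)ˣ),
      (∀ h : ↥H, U * R h = R (conjHom H g h) * U) →
      ∀ (k : ℤ) (h : ↥H), U ^ k * R h =
        R ⟨g ^ k * (h : G) * (g ^ k)⁻¹, hmemconj _ h⟩ * U ^ k := by
    intro U hU
    have hstep : ∀ h : ↥H, U * R h = R ⟨g * (h : G) * g⁻¹, hmemconj g h⟩ * U := hU
    have hstep' : ∀ h : ↥H, U⁻¹ * R h = R ⟨g⁻¹ * (h : G) * g, by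
        simpa using hmemconj g⁻¹ h⟩ * U⁻¹ := by
      intro h
      set h' : ↥H := ⟨g⁻¹ * (h : G) * g, by simpa using hmemconj g⁻¹ h⟩ with hh'
      have h2 := hstep h'
      have h3 : (⟨g * (h' : G) * g⁻¹, hmemconj g h'⟩ : ↥H) = h := by
        apply Subtype.ext; show g * (g⁻¹ * (h : G) * g) * g⁻¹ = (h : G); group
      rw [h3] at h2
      calc U⁻¹ * R h = U⁻¹ * ((R h * U) * U⁻¹) := by group
        _ = U⁻¹ * ((U * R h') * U⁻¹) := by rw [← h2]
        _ = R h' * U⁻¹ := by group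
    intro k
    induction k using Int.induction_on with
    | zero =>
        intro h
        have h3 : (⟨g ^ (0:ℤ) * (h : G) * (g ^ (0:ℤ))⁻¹, hmemconj _ h⟩ : ↥H) = h := by
          apply Subtype.ext; simp
        rw [h3]; simp
    | succ k ih =>
        intro h
        have hz1 : U ^ ((k : ℤ) + 1) = U ^ (k : ℤ) * U := zpow_add_one U k
        have h4 : (⟨g ^ (k:ℤ) * ((⟨g * (h:G) * g⁻¹, hmemconj g h⟩ : ↥H) : G) * (g ^ (k:ℤ))⁻¹,
            hmemconj _ _⟩ : ↥H) = ⟨g ^ ((k:ℤ)+1) * (h : G) * (g ^ ((k:ℤ)+1))⁻¹, hmemconj _ h⟩ := by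
          apply Subtype.ext
          show g ^ (k:ℤ) * (g * (h:G) * g⁻¹) * (g ^ (k:ℤ))⁻¹
              = g ^ ((k:ℤ)+1) * (h : G) * (g ^ ((k:ℤ)+1))⁻¹
          rw [zpow_add_one]
          group
        calc U ^ ((k:ℤ)+1) * R h = U ^ (k:ℤ) * (U * R h) := by rw [hz1]; group
          _ = U ^ (k:ℤ) * (R ⟨g * (h:G) * g⁻¹, hmemconj g h⟩ * U) := by rw [hstep h]
          _ = (U ^ (k:ℤ) * R ⟨g * (h:G) * g⁻¹, hmemconj g h⟩) * U := by group
          _ = (R ⟨g ^ ((k:ℤ)+1) * (h : G) * (g ^ ((k:ℤ)+1))⁻¹, hmemconj _ h⟩ * U ^ (k:ℤ)) * U := by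
              rw [ih, h4]
          _ = R ⟨g ^ ((k:ℤ)+1) * (h : G) * (g ^ ((k:ℤ)+1))⁻¹, hmemconj _ h⟩ * U ^ ((k:ℤ)+1) := by
              rw [hz1]; group
    | pred k ih =>
        intro h
        have hz1 : U ^ (-(k : ℤ) - 1) = U ^ (-(k : ℤ)) * U⁻¹ := by
          rw [zpow_sub_one]
        have h4 : (⟨g ^ (-(k:ℤ)) * ((⟨g⁻¹ * (h:G) * g, by simpa using hmemconj g⁻¹ h⟩ : ↥H) : G)
              * (g ^ (-(k:ℤ)))⁻¹, hmemconj _ _⟩ : ↥H)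
            = ⟨g ^ (-(k:ℤ)-1) * (h : G) * (g ^ (-(k:ℤ)-1))⁻¹, hmemconj _ h⟩ := by
          apply Subtype.ext
          show g ^ (-(k:ℤ)) * (g⁻¹ * (h:G) * g) * (g ^ (-(k:ℤ)))⁻¹
              = g ^ (-(k:ℤ)-1) * (h : G) * (g ^ (-(k:ℤ)-1))⁻¹
          rw [zpow_sub_one]
          group
        calc U ^ (-(k:ℤ)-1) * R h = U ^ (-(k:ℤ)) * (U⁻¹ * R h) := by rw [hz1]; group
          _ = U ^ (-(k:ℤ)) * (R ⟨g⁻¹ * (h:G) * g, by simpa using hmemconj g⁻¹ h⟩ * U⁻¹) := by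
              rw [hstep']
          _ = (U ^ (-(k:ℤ)) * R ⟨g⁻¹ * (h:G) * g, by simpa using hmemconj g⁻¹ h⟩) * U⁻¹ := by
              group
          _ = (R ⟨g ^ (-(k:ℤ)-1) * (h : G) * (g ^ (-(k:ℤ)-1))⁻¹, hmemconj _ h⟩ * U ^ (-(k:ℤ))) * U⁻¹ := by
              rw [ih, h4]
          _ = R ⟨g ^ (-(k:ℤ)-1) * (h : G) * (g ^ (-(k:ℤ)-1))⁻¹, hmemconj _ h⟩ * U ^ (-(k:ℤ)-1) := by
              rw [hz1]; group
  -- Schur scalar and normalization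
  set gp : ↥H := ⟨g ^ p, hgpH⟩ with hgp_def
  have hgpz : ∀ h : ↥H, (⟨g ^ (p:ℤ) * (h : G) * (g ^ (p:ℤ))⁻¹, hmemconj _ h⟩ : ↥H)
      = gp * h * gp⁻¹ := by
    intro h; apply Subtype.ext; simp [hgp_def, zpow_natCast]
  have hU0p : ∀ h : ↥H, U0 ^ (p:ℤ) * R h = (R gp * R h * (R gp)⁻¹) * U0 ^ (p:ℤ) := by
    intro h
    rw [conj_pow U0 hU0' (p:ℤ) h, hgpz h]
    simp [map_mul]
  set B : (W →ₗ[ℂ] W)ˣ := (R gp)⁻¹ * U0 ^ (p:ℤ) with hB_def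
  have hBcomm : ∀ h : ↥H, B * R h = R h * B := by
    intro h
    rw [hB_def]
    calc (R gp)⁻¹ * U0 ^ (p:ℤ) * R h = (R gp)⁻¹ * (U0 ^ (p:ℤ) * R h) := by group
      _ = (R gp)⁻¹ * ((R gp * R h * (R gp)⁻¹) * U0 ^ (p:ℤ)) := by rw [hU0p h]
      _ = R h * ((R gp)⁻¹ * U0 ^ (p:ℤ)) := by group
  have hBlin : ∀ (h : ↥H) (w : W), (B : W →ₗ[ℂ] W) (ρ h w) = ρ h ((B : W →ₗ[ℂ] W) w) := by
    intro h w
    have := congrArg (fun u : (W →ₗ[ℂ] W)ˣ => (u : W →ₗ[ℂ] W) w) (hBcomm h)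
    simpa [Units.val_mul, Module.End.mul_apply, hRval] using this
  obtain ⟨cc, hcc⟩ := hschur (B : W →ₗ[ℂ] W) hBlin
  have hcc0 : cc ≠ 0 := by
    intro h0
    obtain ⟨w0, hw0⟩ := exists_ne (0 : W)
    have h1 : (B : W →ₗ[ℂ] W) (((B⁻¹ : (W →ₗ[ℂ] W)ˣ) : W →ₗ[ℂ] W) w0) = w0 := by
      exact LinearMap.congr_fun B.mul_inv w0
    rw [hcc, h0] at h1
    simp at h1
    exact hw0 h1.symm
  obtain ⟨lam, hlam⟩ := IsAlgClosed.exists_pow_nat_eq (cc⁻¹) hpos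
  have hlam0 : lam ≠ 0 := by
    intro h0
    rw [h0, zero_pow hpos.ne'] at hlam
    exact hcc0 (by simpa using hlam.symm)
  set Lam : (W →ₗ[ℂ] W)ˣ := ⟨lam • (1 : W →ₗ[ℂ] W), lam⁻¹ • (1 : W →ₗ[ℂ] W),
    by ext w; simp [Module.End.mul_apply, smul_smul, mul_inv_cancel₀ hlam0, inv_mul_cancel₀ hlam0],
    by ext w; simp [Module.End.mul_apply, smul_smul, mul_inv_cancel₀ hlam0, inv_mul_cancel₀ hlam0]⟩ with hLam_def
  have hLamcomm : ∀ x : (W →ₗ[ℂ] W)ˣ, Lam * x = x * Lam := by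
    intro x
    ext w
    show (lam • (1 : W →ₗ[ℂ] W) * (x : W →ₗ[ℂ] W)) w = ((x : W →ₗ[ℂ] W) * (lam • 1)) w
    simp [Module.End.mul_apply]
  set T : (W →ₗ[ℂ] W)ˣ := Lam * U0 with hT_def
  have hT' : ∀ h : ↥H, T * R h = R (conjHom H g h) * T := by
    intro h
    calc Lam * U0 * R h = Lam * (U0 * R h) := by group
      _ = Lam * (R (conjHom H g h) * U0) := by rw [hU0' h]
      _ = (Lam * R (conjHom H g h)) * U0 := by group
      _ = (R (conjHom H g h) * Lam) * U0 := by rw [hLamcomm]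
      _ = R (conjHom H g h) * (Lam * U0) := by group
  have hTp : T ^ (p:ℤ) = R gp := by
    have hcom : Commute Lam U0 := hLamcomm U0
    have h1 : T ^ p = Lam ^ p * U0 ^ p := hcom.mul_pow p
    have hU0pval : U0 ^ (p:ℤ) = R gp * B := by rw [hB_def]; group
    have hLamp : ((Lam ^ p : (W →ₗ[ℂ] W)ˣ) : W →ₗ[ℂ] W) = cc⁻¹ • (1 : W →ₗ[ℂ] W) := by
      rw [Units.val_pow_eq_pow_val]
      show (lam • (1 : W →ₗ[ℂ] W)) ^ p = cc⁻¹ • 1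
      rw [smul_pow, one_pow, hlam]
    rw [zpow_natCast]
    ext w
    rw [h1]
    show ((Lam ^ p : (W →ₗ[ℂ] W)ˣ) : W →ₗ[ℂ] W) (((U0 ^ p : (W →ₗ[ℂ] W)ˣ) : W →ₗ[ℂ] W) w)
        = (ρ gp) w
    have hU0pl : ((U0 ^ p : (W →ₗ[ℂ] W)ˣ) : W →ₗ[ℂ] W) = (ρ gp) * (cc • 1) := by
      have : ((U0 ^ (p:ℤ) : (W →ₗ[ℂ] W)ˣ) : W →ₗ[ℂ] W) = ((R gp * B : (W →ₗ[ℂ] W)ˣ) : W →ₗ[ℂ] W) := by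
        rw [hU0pval]
      rw [zpow_natCast] at this
      rw [this, Units.val_mul, hRval, hcc]
      rfl
    rw [hLamp, hU0pl]
    simp [Module.End.mul_apply, smul_smul, inv_mul_cancel₀ hcc0, mul_inv_cancel₀ hcc0]
  have hTconj : ∀ (k : ℤ) (h : ↥H), T ^ k * R h =
      R ⟨g ^ k * (h : G) * (g ^ k)⁻¹, hmemconj _ h⟩ * T ^ k := conj_pow T hT'
  have hTconj' : ∀ (k : ℤ) (h : ↥H), R h * T ^ k =
      T ^ k * R ⟨(g ^ k)⁻¹ * (h : G) * g ^ k, by simpa using hmemconj (g ^ k)⁻¹ h⟩ := by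
    intro k h
    set h' : ↥H := ⟨(g ^ k)⁻¹ * (h : G) * g ^ k, by simpa using hmemconj (g ^ k)⁻¹ h⟩ with hh'
    have h2 := hTconj k h'
    have h3 : (⟨g ^ k * (h' : G) * (g ^ k)⁻¹, hmemconj _ h'⟩ : ↥H) = h := by
      apply Subtype.ext
      show g ^ k * ((g ^ k)⁻¹ * (h : G) * g ^ k) * (g ^ k)⁻¹ = (h : G)
      group
    rw [h3] at h2
    calc R h * T ^ k = (T ^ k * (T ^ k)⁻¹) * (R h * T ^ k) := by group
      _ = T ^ k * ((T ^ k)⁻¹ * ((R h * T ^ k) * (T ^ k)⁻¹) * T ^ k) := by group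
      _ = T ^ k * ((T ^ k)⁻¹ * ((T ^ k * R h') * (T ^ k)⁻¹) * T ^ k) := by rw [← h2]
      _ = T ^ k * R h' := by group
  have hTper : ∀ m : ℤ, T ^ ((p:ℤ) * m) = R (gp ^ m) := by
    intro m
    rw [zpow_mul, hTp, map_zpow]
  -- the candidate extension, as a function to units
  set F : G → (W →ₗ[ℂ] W)ˣ :=
    fun x => T ^ kk x * R ⟨(g ^ kk x)⁻¹ * x, hkk x⟩ with hF_def
  have wd : ∀ (x : G) (k : ℤ) (hk : (g ^ k)⁻¹ * x ∈ H),
      F x = T ^ k * R ⟨(g ^ k)⁻¹ * x, hk⟩ := by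
    intro x k hk
    have hmem : g ^ (k - kk x) ∈ H := by
      have h1 := H.mul_mem hk (H.inv_mem (hkk x))
      have h2 : (g ^ k)⁻¹ * x * ((g ^ kk x)⁻¹ * x)⁻¹ = g ^ (kk x - k) := by
        rw [zpow_sub]; group
      rw [h2] at h1
      have := H.inv_mem h1
      rwa [← zpow_neg, neg_sub] at this
    obtain ⟨m, hm⟩ := hdiv _ hmem
    have hk_eq : k = kk x + (p:ℤ) * m := by omega
    have hsub : (⟨(g ^ kk x)⁻¹ * x, hkk x⟩ : ↥H)
        = gp ^ m * ⟨(g ^ k)⁻¹ * x, hk⟩ := by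
      apply Subtype.ext
      show (g ^ kk x)⁻¹ * x = ((gp : G) ^ m) * ((g ^ k)⁻¹ * x)
      have hgpm : (gp : G) ^ m = g ^ ((p:ℤ) * m) := by
        show (g ^ p : G) ^ m = g ^ ((p:ℤ) * m)
        rw [← zpow_natCast g p, ← zpow_mul]
      rw [hgpm, hk_eq]
      rw [zpow_add]
      group
    rw [hF_def]
    simp only
    rw [hsub, map_mul, ← hTper m]
    have hTk : T ^ k = T ^ kk x * T ^ ((p:ℤ) * m) := by rw [hk_eq, zpow_add]
    rw [hTk]
    group
  have hF1 : F 1 = 1 := by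
    have h0 : (g ^ (0:ℤ))⁻¹ * 1 ∈ H := by simpa using H.one_mem
    rw [wd 1 0 h0]
    have : (⟨(g ^ (0:ℤ))⁻¹ * 1, h0⟩ : ↥H) = 1 := by apply Subtype.ext; simp
    rw [this, map_one]
    simp
  have hFmul : ∀ x y : G, F (x * y) = F x * F y := by
    intro x y
    set kx := kk x with hkx; set ky := kk y with hky
    have hx : (g ^ kx)⁻¹ * x ∈ H := hkk x
    have hy : (g ^ ky)⁻¹ * y ∈ H := hkk y
    set hx' : ↥H := ⟨(g ^ kx)⁻¹ * x, hx⟩ with hhx'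
    set hy' : ↥H := ⟨(g ^ ky)⁻¹ * y, hy⟩ with hhy'
    set hxc : ↥H := ⟨(g ^ ky)⁻¹ * (hx' : G) * g ^ ky, by simpa using hmemconj (g ^ ky)⁻¹ hx'⟩
      with hhxc
    have hxy : (g ^ (kx + ky))⁻¹ * (x * y) ∈ H := by
      have := H.mul_mem hxc.2 hy
      have heq : ((hxc : G)) * ((g ^ ky)⁻¹ * y) = (g ^ (kx + ky))⁻¹ * (x * y) := by
        show ((g ^ ky)⁻¹ * ((g ^ kx)⁻¹ * x) * g ^ ky) * ((g ^ ky)⁻¹ * y)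
            = (g ^ (kx + ky))⁻¹ * (x * y)
        rw [zpow_add]
        group
      rwa [heq] at this
    have hprod : (⟨(g ^ (kx + ky))⁻¹ * (x * y), hxy⟩ : ↥H) = hxc * hy' := by
      apply Subtype.ext
      show (g ^ (kx + ky))⁻¹ * (x * y)
          = ((g ^ ky)⁻¹ * ((g ^ kx)⁻¹ * x) * g ^ ky) * ((g ^ ky)⁻¹ * y)
      rw [zpow_add]
      group
    calc F (x * y) = T ^ (kx + ky) * R ⟨(g ^ (kx + ky))⁻¹ * (x * y), hxy⟩ := wd _ _ hxy
      _ = T ^ (kx + ky) * (R hxc * R hy') := by rw [hprod, map_mul]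
      _ = (T ^ kx * (T ^ ky * R hxc)) * R hy' := by rw [zpow_add]; group
      _ = (T ^ kx * (R hx' * T ^ ky)) * R hy' := by rw [← hTconj' ky hx']
      _ = (T ^ kx * R hx') * (T ^ ky * R hy') := by group
      _ = F x * F y := rfl
  set PiG : G →* (W →ₗ[ℂ] W)ˣ := { toFun := F, map_one' := hF1, map_mul' := hFmul }
    with hPiG_def
  set piG : Representation ℂ G W := (Units.coeHom (W →ₗ[ℂ] W)).comp PiG with hpiG_def
  have hpival : ∀ x : G, piG x = ((F x : (W →ₗ[ℂ] W)ˣ) : W →ₗ[ℂ] W) := fun x => rfl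
  have hpi1 : ∀ h : ↥H, piG (h : G) = ρ h := by
    intro h
    have h0 : (g ^ (0:ℤ))⁻¹ * (h : G) ∈ H := by simpa using h.2
    have := wd (h : G) 0 h0
    rw [hpival, this]
    have h1 : (⟨(g ^ (0:ℤ))⁻¹ * (h : G), h0⟩ : ↥H) = h := by apply Subtype.ext; simp
    rw [h1]
    simp [hRval]
  have hpicomp : piG.comp H.subtype = ρ := by
    ext h
    exact congrFun (congrArg (fun f : W →ₗ[ℂ] W => (f : W → W)) (hpi1 h)) _
  have hpiirr : RepIrreducible piG := by
    refine ⟨hW, fun q hq => hρ.2 q ?_⟩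
    intro h v hv
    have := hq ((h : G)) v hv
    rwa [hpi1 h] at this
  have hpiinv : ∀ (x : G) (w : W), piG x⁻¹ (piG x w) = w := by
    intro x w
    have h1 : piG x⁻¹ * piG x = 1 := by
      rw [← map_mul, inv_mul_cancel, map_one]
    exact LinearMap.congr_fun h1 w
  have hpiinv' : ∀ (x : G) (w : W), piG x (piG x⁻¹ w) = w := by
    intro x w
    have h1 : piG x * piG x⁻¹ = 1 := by
      rw [← map_mul, mul_inv_cancel, map_one]
    exact LinearMap.congr_fun h1 w
  have hpiinj : ∀ x : G, Function.Injective (piG x) := by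
    intro x a b hab
    have := congrArg (piG x⁻¹) hab
    rwa [hpiinv, hpiinv] at this
  refine ⟨piG, hpicomp, hpiirr, ?_⟩
  intro ω hω1 hωinj
  set c : Fin p → ℂˣ := fun i => ω i g with hc_def
  have hωval : ∀ (i : Fin p) (x : G) (k : ℤ), (g ^ k)⁻¹ * x ∈ H → ω i x = c i ^ k := by
    intro i x k hk
    have h1 : x = g ^ k * ((g ^ k)⁻¹ * x) := by group
    rw [h1, map_mul, hω1 i _ hk, mul_one, map_zpow]
  have hcinj : Function.Injective c := by
    intro i j hij
    apply hωinj
    ext x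
    rw [hωval i x (kk x) (hkk x), hωval j x (kk x) (hkk x), hij]
  have hcp : ∀ i, c i ^ (p:ℤ) = 1 := by
    intro i
    rw [zpow_natCast, ← map_pow, hω1 i _ hgpH]
  -- pairwise non-isomorphic twists
  have hnoniso : ∀ i j, i ≠ j → ¬ RepIso (TwistRep piG (ω i)) (TwistRep piG (ω j)) := by
    intro i j hij ⟨e2, he2⟩
    have he2' : ∀ (x : G) (v : W), e2 ((ω i x : ℂ) • piG x v) = (ω j x : ℂ) • piG x (e2 v) :=
      fun x v => he2 x v
    have hcomm : ∀ (h : ↥H) (w : W), e2.toLinearMap (ρ h w) = ρ h (e2.toLinearMap w) := by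
      intro h w
      have := he2' (h : G) w
      rw [hω1 i _ h.2, hω1 j _ h.2, hpi1 h] at this
      simpa using this
    obtain ⟨c0, hc0⟩ := hschur e2.toLinearMap hcomm
    have he2v : ∀ w : W, e2 w = c0 • w := by
      intro w
      have := LinearMap.congr_fun hc0 w
      simpa using this
    have hc00 : c0 ≠ 0 := by
      intro h0
      obtain ⟨w0, hw0⟩ := exists_ne (0 : W)
      have := he2v w0
      rw [h0, zero_smul] at this
      exact hw0 (e2.injective (by rw [this, map_zero]))
    obtain ⟨w0, hw0⟩ := exists_ne (0 : W)
    have hgw0 : piG g w0 ≠ 0 := by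
      intro h0
      exact hw0 (hpiinj g (by rw [h0, map_zero]))
    have key := he2' g w0
    rw [he2v, he2v, smul_smul, map_smul, smul_smul] at key
    have h2 : ((c0 * (ω i g : ℂ)) - ((ω j g : ℂ) * c0)) • piG g w0 = 0 := by
      rw [sub_smul, key, sub_self]
    rw [smul_eq_zero] at h2
    rcases h2 with h2 | h2
    · have h3 : (ω i g : ℂ) = (ω j g : ℂ) := by
        have h4 := sub_eq_zero.mp h2
        rw [mul_comm c0 _] at h4
        exact mul_right_cancel₀ hc00 h4
      exact hij (hcinj (Units.ext h3))
    · exact hgw0 h2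
  refine ⟨?_, hnoniso⟩
  set Φ : (Fin p → W) →ₗ[ℂ] ↥(IndSpace H ρ) := PhiMap H ρ piG ω hpi1 hω1 with hΦ_def
  have hΦval : ∀ (v : Fin p → W) (y : G),
      ((Φ v : ↥(IndSpace H ρ)) : G → W) y = ∑ i, ((ω i y⁻¹ : ℂˣ) : ℂ) • piG y⁻¹ (v i) :=
    PhiMap_val H ρ piG ω hpi1 hω1
  have hPhiEq : ∀ (x : G) (v : Fin p → W),
      Φ ((PiRep fun i => TwistRep piG (ω i)) x v) = (IndRep H ρ) x (Φ v) := by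
    intro x v
    apply Subtype.ext
    funext y
    show ∑ i, ((ω i y⁻¹ : ℂˣ) : ℂ) • piG y⁻¹ ((TwistRep piG (ω i)) x (v i))
        = (Φ v : G → W) (x⁻¹ * y)
    rw [hΦval]
    refine Finset.sum_congr rfl fun i _ => ?_
    have h1 : (TwistRep piG (ω i)) x (v i) = ((ω i x : ℂˣ) : ℂ) • piG x (v i) := rfl
    rw [h1, map_smul, smul_smul]
    have h2 : (x⁻¹ * y)⁻¹ = y⁻¹ * x := by group
    have h3 : ((ω i (x⁻¹ * y)⁻¹ : ℂˣ) : ℂ) = ((ω i y⁻¹ : ℂˣ) : ℂ) * ((ω i x : ℂˣ) : ℂ) := by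
      rw [h2, map_mul]; rfl
    have h4 : piG (x⁻¹ * y)⁻¹ (v i) = piG y⁻¹ (piG x (v i)) := by
      rw [h2, map_mul, Module.End.mul_apply]
    rw [h3, h4]
  have hPhiInj : Function.Injective Φ := by
    have hker : ∀ v, Φ v = 0 → v = 0 := by
      intro v hv
      have hvy : ∀ y : G, ∑ i, ((ω i y⁻¹ : ℂˣ) : ℂ) • piG y⁻¹ (v i) = 0 := by
        intro y
        have := congrArg (fun z : ↥(IndSpace H ρ) => (z : G → W) y) hv
        simpa [hΦval] using this
      have hk : ∀ k : Fin p, ∑ i, ((c i : ℂ)) ^ (k : ℕ) • v i = 0 := by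
        intro k
        have h1 := hvy ((g ^ (k : ℕ))⁻¹)
        rw [inv_inv] at h1
        have h2 : piG (g ^ (k : ℕ)) (∑ i, ((c i : ℂ)) ^ (k : ℕ) • v i) = 0 := by
          rw [map_sum, ← h1]
          refine Finset.sum_congr rfl fun i _ => ?_
          rw [map_smul]
          congr 1
          rw [map_pow]
          rfl
        have h3 := hpiinj (g ^ (k : ℕ)) (by rw [h2, map_zero] :
          piG (g ^ (k : ℕ)) (∑ i, ((c i : ℂ)) ^ (k : ℕ) • v i) = piG (g ^ (k : ℕ)) 0)
        exact h3
      exact vand_inj (fun i => (c i : ℂ))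
        (fun i j hij => hcinj (Units.ext hij)) v hk
    intro a b hab
    have h1 : Φ (a - b) = 0 := by rw [map_sub, hab, sub_self]
    have := hker _ h1
    exact sub_eq_zero.mp this
  have hPhiSurj : Function.Surjective Φ := by
    intro f
    set Fz : ℤ → W := fun k => piG (g ^ k) ((f : G → W) (g ^ k)) with hFz_def
    have hfprop : ∀ (g0 : G) (h : ↥H), (f : G → W) (g0 * (h : G)) = ρ h⁻¹ ((f : G → W) g0) :=
      f.2
    have hρinv : ∀ (h : ↥H) (w : W), ρ h (ρ h⁻¹ w) = w := by
      intro h w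
      have h1 : ρ h * ρ h⁻¹ = 1 := by rw [← map_mul, mul_inv_cancel, map_one]
      exact LinearMap.congr_fun h1 w
    have hFzper : ∀ r m : ℤ, Fz (r + (p : ℤ) * m) = Fz r := by
      intro r m
      have hmem : g ^ ((p : ℤ) * m) ∈ H := by
        rw [zpow_mul, zpow_natCast]
        exact Subgroup.zpow_mem H hgpH m
      set hh : ↥H := ⟨g ^ ((p : ℤ) * m), hmem⟩ with hhh
      have h1 : g ^ (r + (p : ℤ) * m) = g ^ r * (hh : G) := by rw [zpow_add]
      show piG (g ^ (r + (p:ℤ) * m)) ((f : G → W) (g ^ (r + (p:ℤ) * m))) = _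
      rw [h1, hfprop (g ^ r) hh, map_mul, Module.End.mul_apply, hpi1 hh, hρinv]
    obtain ⟨v, hv⟩ := vand_surj (fun i => (((c i)⁻¹ : ℂˣ) : ℂ))
      (fun i j hij => hcinj (inv_injective (Units.ext hij))) (fun k => Fz ((k : ℕ) : ℤ))
    have key : ∀ k : ℤ, ∑ i, ((c i ^ (-k) : ℂˣ) : ℂ) • v i = Fz k := by
      intro k
      have hple : (0 : ℤ) < (p : ℤ) := by exact_mod_cast hpos
      have hr0 : 0 ≤ k % (p : ℤ) := Int.emod_nonneg k hple.ne'
      have hrlt : k % (p : ℤ) < (p : ℤ) := Int.emod_lt_of_pos k hple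
      set r := k % (p : ℤ) with hr_def
      set m := k / (p : ℤ) with hm_def
      have hdm := Int.mul_ediv_add_emod k (p : ℤ)
      have hk_eq : k = r + (p : ℤ) * m := by linarith [hdm]
      have hrnat : ((r.toNat : ℕ) : ℤ) = r := Int.toNat_of_nonneg hr0
      set kF : Fin p := ⟨r.toNat, by omega⟩ with hkF
      have hbase := hv kF
      have hcoef : ∀ i, (c i) ^ (-k) = ((c i)⁻¹) ^ (r.toNat : ℕ) := by
        intro i
        have h1 : (c i) ^ (-k) = (c i) ^ (-r) * ((c i) ^ ((p : ℤ))) ^ (-m) := by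
          rw [← zpow_mul, ← zpow_add]
          congr 1
          rw [hk_eq]; ring
        rw [h1, hcp i, one_zpow, mul_one, zpow_neg, inv_pow]
        congr 1
        rw [← zpow_natCast (c i) r.toNat, hrnat]
      have hFzr : Fz k = Fz ((r.toNat : ℕ) : ℤ) := by
        rw [hrnat, hk_eq, hFzper]
      rw [hFzr]
      rw [← hbase]
      refine Finset.sum_congr rfl fun i _ => ?_
      congr 1
      rw [hcoef i]
      rw [Units.val_pow_eq_pow_val]
    have hmain : ∀ y : G, (f : G → W) y = ∑ i, ((ω i y⁻¹ : ℂˣ) : ℂ) • piG y⁻¹ (v i) := by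
      intro y
      set k := kk y with hk_def
      have hy : (g ^ k)⁻¹ * y ∈ H := hkk y
      set hh : ↥H := ⟨(g ^ k)⁻¹ * y, hy⟩ with hhh
      have hωy : ∀ i, ω i y⁻¹ = (c i) ^ (-k) := by
        intro i
        rw [map_inv, hωval i y k hy, ← zpow_neg]
      have hsum : ∑ i, ((ω i y⁻¹ : ℂˣ) : ℂ) • piG y⁻¹ (v i)
          = piG y⁻¹ (∑ i, ((c i ^ (-k) : ℂˣ) : ℂ) • v i) := by
        rw [map_sum]
        refine Finset.sum_congr rfl fun i _ => ?_
        rw [map_smul, hωy i]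
      rw [hsum, key k]
      have hyk : y⁻¹ * g ^ k = ((hh⁻¹ : ↥H) : G) := by
        show y⁻¹ * g ^ k = ((g ^ k)⁻¹ * y)⁻¹
        group
      have h5 : piG y⁻¹ (Fz k) = ρ hh⁻¹ ((f : G → W) (g ^ k)) := by
        show piG y⁻¹ (piG (g ^ k) ((f : G → W) (g ^ k))) = _
        rw [← Module.End.mul_apply, ← map_mul, hyk, hpi1]
      rw [h5]
      have h6 : y = g ^ k * (hh : G) := by
        show y = g ^ k * ((g ^ k)⁻¹ * y)
        group
      calc (f : G → W) y = (f : G → W) (g ^ k * (hh : G)) := by rw [← h6]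
        _ = ρ hh⁻¹ ((f : G → W) (g ^ k)) := hfprop _ _
    refine ⟨v, ?_⟩
    apply Subtype.ext
    funext y
    rw [hΦval]
    exact (hmain y).symm
  set E : (Fin p → W) ≃ₗ[ℂ] ↥(IndSpace H ρ) :=
    LinearEquiv.ofBijective Φ ⟨hPhiInj, hPhiSurj⟩ with hE_def
  have hEval : ∀ v, E v = Φ v := fun v => rfl
  refine ⟨E.symm, ?_⟩
  intro x f
  apply E.injective
  rw [E.apply_symm_apply]
  have h1 : E ((PiRep fun i => TwistRep piG (ω i)) x (E.symm f)) =
      (IndRep H ρ) x (E (E.symm f)) := by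
    rw [hEval, hEval, hPhiEq]
  rw [E.apply_symm_apply] at h1
  exact h1.symm
end

section
/- Let G be a group and H a normal subgroup with G/H cyclic of prime order p, generated by the image of g ∈ G. Let ρ be an irreducible representation of H satisfying Schur's lemma with ρ^g ≇ ρ. Then Ind^G_H ρ is irreducible. -/
set_option maxHeartbeats 1000000
section Aux
variable {G : Type*} [Group G] {H : Subgroup G} [H.Normal]
  {W : Type*} [AddCommGroup W] [Module ℂ W] (ρ : Representation ℂ ↥H W)

theorem RepIso.refl {V : Type*} [AddCommGroup V] [Module ℂ V] (π : Representation ℂ G V) :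
    RepIso π π := ⟨LinearEquiv.refl ℂ V, fun _ _ => rfl⟩

theorem RepIso.symm {V W : Type*} [AddCommGroup V] [Module ℂ V] [AddCommGroup W] [Module ℂ W]
    {π : Representation ℂ G V} {σ : Representation ℂ G W} (h : RepIso π σ) : RepIso σ π := by
  obtain ⟨e, he⟩ := h
  refine ⟨e.symm, fun g w => ?_⟩
  apply e.injective
  simp [he g]

theorem RepIso.trans {V W X : Type*} [AddCommGroup V] [Module ℂ V] [AddCommGroup W] [Module ℂ W]
    [AddCommGroup X] [Module ℂ X]
    {π : Representation ℂ G V} {σ : Representation ℂ G W} {τ : Representation ℂ G X}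
    (h : RepIso π σ) (h' : RepIso σ τ) : RepIso π τ := by
  obtain ⟨e, he⟩ := h; obtain ⟨e', he'⟩ := h'
  exact ⟨e.trans e', fun g v => by simp [he, he']⟩

theorem conjHom_mul (a b : G) : (conjHom H a).comp (conjHom H b) = conjHom H (a * b) := by
  ext h
  simp [conjHom, mul_assoc]

theorem conjHom_one : conjHom H (1 : G) = MonoidHom.id ↥H := by
  ext h; simp [conjHom]

theorem RepConj_mul (a b : G) : RepConj (RepConj ρ a) b = RepConj ρ (a * b) := by
  unfold RepConj
  rw [MonoidHom.comp_assoc, conjHom_mul]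

theorem RepConj_one : RepConj ρ (1 : G) = ρ := by
  unfold RepConj
  rw [conjHom_one, MonoidHom.comp_id]

theorem RepIso.conj {W₁ W' : Type*} [AddCommGroup W₁] [Module ℂ W₁] [AddCommGroup W'] [Module ℂ W']
    {ρ₁ : Representation ℂ ↥H W₁} {σ : Representation ℂ ↥H W'} (h : RepIso ρ₁ σ) (x : G) :
    RepIso (RepConj ρ₁ x) (RepConj σ x) := by
  obtain ⟨e, he⟩ := h
  exact ⟨e, fun g v => he _ v⟩

/-- conjugation by an element of `H` is an inner iso -/
theorem RepConj_mem {h₀ : G} (hh : h₀ ∈ H) : RepIso (RepConj ρ h₀) ρ := by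
  refine ⟨LinearEquiv.ofLinear (ρ ⟨h₀, hh⟩⁻¹) (ρ ⟨h₀, hh⟩) ?_ ?_, ?_⟩
  · ext w; simp [← Module.End.mul_apply, ← map_mul]
  · ext w; simp [← Module.End.mul_apply, ← map_mul]
  · intro h w
    have h1 : conjHom H h₀ h = ⟨h₀, hh⟩ * h * ⟨h₀, hh⟩⁻¹ := by
      ext; simp [conjHom]
    have h2 : RepConj ρ h₀ h = ρ (⟨h₀, hh⟩ * h * ⟨h₀, hh⟩⁻¹) := by
      rw [← h1]; rfl
    rw [h2]
    simp [← Module.End.mul_apply, ← map_mul, mul_assoc]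
theorem conj_zpow_not_iso {p : ℕ} (hp : p.Prime) {g : G} (hgp : g ^ p ∈ H)
    (hconj : ¬ RepIso (RepConj ρ g) ρ) :
    ∀ k : ℤ, ¬ (p:ℤ) ∣ k → ¬ RepIso (RepConj ρ (g ^ k)) ρ := by
  set T : AddSubgroup ℤ :=
    { carrier := {m : ℤ | RepIso (RepConj ρ (g ^ m)) ρ}
      zero_mem' := by
        show RepIso (RepConj ρ (g ^ (0:ℤ))) ρ
        rw [zpow_zero, RepConj_one]
        exact RepIso.refl ρ
      add_mem' := by
        intro a b ha hb
        show RepIso (RepConj ρ (g ^ (a + b))) ρ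
        rw [zpow_add, ← RepConj_mul]
        have ha' : RepIso (RepConj ρ (g ^ a)) ρ := ha
        exact ((ha'.conj (g ^ b)).trans hb)
      neg_mem' := by
        intro a ha
        show RepIso (RepConj ρ (g ^ (-a))) ρ
        have ha' : RepIso (RepConj ρ (g ^ a)) ρ := ha
        have := (ha'.conj (g ^ (-a))).symm
        rw [RepConj_mul, ← zpow_add, add_neg_cancel, zpow_zero, RepConj_one] at this
        exact this } with hT
  intro k hk hiso
  have hkT : k ∈ T := hiso
  have hpT : (p:ℤ) ∈ T := by
    show RepIso (RepConj ρ (g ^ ((p:ℕ):ℤ))) ρ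
    rw [zpow_natCast]
    exact RepConj_mem ρ hgp
  have hcop : IsCoprime k (p:ℤ) := by
    rw [Int.isCoprime_iff_gcd_eq_one]
    have h2 : ¬ p ∣ k.natAbs := by rwa [Int.natCast_dvd] at hk
    exact Nat.Coprime.gcd_eq_one (Nat.Coprime.symm ((Nat.Prime.coprime_iff_not_dvd hp).2 h2))
  obtain ⟨a, b, hab⟩ := hcop
  have h1T : (1:ℤ) ∈ T := by
    rw [← hab]
    exact T.add_mem (by simpa [smul_eq_mul] using T.zsmul_mem hkT a)
      (by simpa [smul_eq_mul] using T.zsmul_mem hpT b)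
  apply hconj
  have : RepIso (RepConj ρ (g ^ (1:ℤ))) ρ := h1T
  rwa [zpow_one] at this

/-- conjugate of an irreducible representation is irreducible -/
theorem RepConj_irreducible (hρ : RepIrreducible ρ) (x : G) :
    RepIrreducible (RepConj ρ x) := by
  refine ⟨hρ.1, fun q hq => hρ.2 q fun h v hv => ?_⟩
  have key : RepConj ρ x (conjHom H x⁻¹ h) = ρ h := by
    show ρ (conjHom H x (conjHom H x⁻¹ h)) = ρ h
    congr 1
    ext; simp [conjHom, mul_assoc]
  rw [← key]
  exact hq _ v hv
end Aux

open scoped Classical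

section Ind
variable {G : Type*} [Group G] (H : Subgroup G) [H.Normal]
  {W : Type*} [AddCommGroup W] [Module ℂ W] (ρ : Representation ℂ ↥H W)

/-- functions in the induced space supported on the coset `aH` -/
def cpt (a : G) : Submodule ℂ ↥(IndSpace H ρ) where
  carrier := {f | ∀ x : G, a⁻¹ * x ∉ H → (f : G → W) x = 0}
  add_mem' := by intro u v hu hv x hx; simp [hu x hx, hv x hx]
  zero_mem' := by intro x hx; rfl
  smul_mem' := by intro c u hu x hx; simp [hu x hx]

/-- evaluation at a point -/
def evmap (a : G) : ↥(IndSpace H ρ) →ₗ[ℂ] W where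
  toFun f := (f : G → W) a
  map_add' u v := rfl
  map_smul' c u := rfl

theorem mem_cpt {a : G} {f : ↥(IndSpace H ρ)} :
    f ∈ cpt H ρ a ↔ ∀ x : G, a⁻¹ * x ∉ H → (f : G → W) x = 0 := Iff.rfl

theorem ind_eval (f : ↥(IndSpace H ρ)) {a x : G} (h : a⁻¹ * x ∈ H) :
    (f : G → W) x = ρ (⟨a⁻¹ * x, h⟩ : ↥H)⁻¹ ((f : G → W) a) := by
  have h2 := f.2 a (⟨a⁻¹ * x, h⟩ : ↥H)
  calc (f : G → W) x = (f : G → W) (a * (a⁻¹ * x)) := by rw [mul_inv_cancel_left]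
  _ = ρ (⟨a⁻¹ * x, h⟩ : ↥H)⁻¹ ((f : G → W) a) := h2

theorem cpt_eq_zero {a : G} {f : ↥(IndSpace H ρ)} (hf : f ∈ cpt H ρ a)
    (h0 : (f : G → W) a = 0) : f = 0 := by
  ext x
  by_cases h : a⁻¹ * x ∈ H
  · rw [ind_eval H ρ f h, h0, map_zero]; rfl
  · rw [hf x h]; rfl

theorem indRep_apply (y : G) (f : ↥(IndSpace H ρ)) (x : G) :
    ((IndRep H ρ y f : ↥(IndSpace H ρ)) : G → W) x = (f : G → W) (y⁻¹ * x) := rfl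

theorem indRep_cpt {a : G} {f : ↥(IndSpace H ρ)} (hf : f ∈ cpt H ρ a) (y : G) :
    IndRep H ρ y f ∈ cpt H ρ (y * a) := by
  intro x hx
  rw [indRep_apply]
  apply hf
  intro hmem
  apply hx
  rwa [mul_inv_rev, mul_assoc]

theorem cpt_congr {a b : G} (h : a⁻¹ * b ∈ H) : cpt H ρ a = cpt H ρ b := by
  have key : ∀ {a b : G}, a⁻¹ * b ∈ H → ∀ {f : ↥(IndSpace H ρ)},
      f ∈ cpt H ρ a → f ∈ cpt H ρ b := by
    intro a b hab f hf x hx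
    apply hf
    intro hmem
    apply hx
    have : b⁻¹ * x = (a⁻¹ * b)⁻¹ * (a⁻¹ * x) := by group
    rw [this]
    exact mul_mem (inv_mem hab) hmem
  ext f
  exact ⟨key h, key (by simpa using inv_mem h)⟩

/-- the canonical element of the induced space supported on `aH` with value `w` at `a` -/
noncomputable def mkfun (a : G) (w : W) : ↥(IndSpace H ρ) :=
  ⟨fun x => if h : a⁻¹ * x ∈ H then ρ (⟨a⁻¹ * x, h⟩ : ↥H)⁻¹ w else 0, by
    intro x h'
    dsimp only
    by_cases h : a⁻¹ * x ∈ H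
    · have hmem : a⁻¹ * (x * (h' : G)) ∈ H := by
        rw [← mul_assoc]; exact mul_mem h h'.2
      rw [dif_pos h, dif_pos hmem]
      have : (⟨a⁻¹ * (x * (h' : G)), hmem⟩ : ↥H) = ⟨a⁻¹ * x, h⟩ * h' := by
        ext; simp [mul_assoc]
      rw [this, mul_inv_rev, map_mul]
      rfl
    · have hmem : ¬ a⁻¹ * (x * (h' : G)) ∈ H := by
        intro hc
        apply h
        have : a⁻¹ * x = (a⁻¹ * (x * (h' : G))) * (h' : G)⁻¹ := by group
        rw [this]
        exact mul_mem hc (inv_mem h'.2)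
      rw [dif_neg h, dif_neg hmem, map_zero]⟩

theorem mkfun_mem_cpt (a : G) (w : W) : mkfun H ρ a w ∈ cpt H ρ a := by
  intro x hx
  exact dif_neg hx

theorem mkfun_eval (a : G) (w : W) : evmap H ρ a (mkfun H ρ a w) = w := by
  show (if h : a⁻¹ * a ∈ H then ρ (⟨a⁻¹ * a, h⟩ : ↥H)⁻¹ w else 0) = w
  rw [dif_pos (by simpa using one_mem H : a⁻¹ * a ∈ H)]
  have : (⟨a⁻¹ * a, by simpa using one_mem H⟩ : ↥H) = 1 := by ext; simp
  rw [this, inv_one, map_one]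
  rfl

/-- equivariance of evaluation: `ev_a (h • f) = ρ^{a⁻¹}(h) (ev_a f)` -/
theorem evmap_equivariant (a : G) (h : ↥H) (f : ↥(IndSpace H ρ)) :
    evmap H ρ a (IndRep H ρ (h : G) f) = RepConj ρ a⁻¹ h (evmap H ρ a f) := by
  show ((IndRep H ρ (h:G) f : ↥(IndSpace H ρ)) : G → W) a = _
  rw [indRep_apply]
  have hmem : a⁻¹ * ((h : G)⁻¹ * a) ∈ H := by
    have : a⁻¹ * ((h : G)⁻¹ * a) = a⁻¹ * (h : G)⁻¹ * (a⁻¹)⁻¹ := by group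
    rw [this]
    exact Subgroup.Normal.conj_mem ‹H.Normal› _ (inv_mem h.2) a⁻¹
  rw [ind_eval H ρ f hmem]
  have : (⟨a⁻¹ * ((h:G)⁻¹ * a), hmem⟩ : ↥H)⁻¹ = conjHom H a⁻¹ h := by
    ext; simp [conjHom, mul_assoc]
  rw [this]
  rfl

/-- the piece of `f` supported on the coset `aH` -/
noncomputable def piece (a : G) (f : ↥(IndSpace H ρ)) : ↥(IndSpace H ρ) :=
  ⟨fun x => if a⁻¹ * x ∈ H then (f : G → W) x else 0, by
    intro x h'
    dsimp only
    by_cases h : a⁻¹ * x ∈ H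
    · have hmem : a⁻¹ * (x * (h' : G)) ∈ H := by
        rw [← mul_assoc]; exact mul_mem h h'.2
      rw [if_pos h, if_pos hmem]
      exact f.2 x h'
    · have hmem : ¬ a⁻¹ * (x * (h' : G)) ∈ H := by
        intro hc
        apply h
        have : a⁻¹ * x = (a⁻¹ * (x * (h' : G))) * (h' : G)⁻¹ := by group
        rw [this]
        exact mul_mem hc (inv_mem h'.2)
      rw [if_neg h, if_neg hmem, map_zero]⟩

theorem piece_mem_cpt (a : G) (f : ↥(IndSpace H ρ)) : piece H ρ a f ∈ cpt H ρ a := by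
  intro x hx
  exact if_neg hx

theorem piece_apply (a : G) (f : ↥(IndSpace H ρ)) (x : G) :
    ((piece H ρ a f : ↥(IndSpace H ρ)) : G → W) x
      = if a⁻¹ * x ∈ H then (f : G → W) x else 0 := rfl

end Ind


/-- If `G/H` is cyclic of prime order `p` generated by the image of `g`, and `ρ` is an
irreducible representation of `H` satisfying Schur's lemma with `ρ^g ≇ ρ`, then the
induced representation `Ind_H^G ρ` is irreducible. -/
theorem statement4 {G : Type} [Group G] (H : Subgroup G) [H.Normal]
    (p : ℕ) (hp : p.Prime) (hcard : Nat.card (G ⧸ H) = p)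
    (g : G) (hgen : ∀ x : G ⧸ H, x ∈ Subgroup.zpowers ((g : G ⧸ H)))
    {W : Type} [AddCommGroup W] [Module ℂ W]
    (ρ : Representation ℂ ↥H W) (hρ : RepIrreducible ρ) (hschur : RepSchur ρ)
    (hconj : ¬ RepIso (RepConj ρ g) ρ) :
    RepIrreducible (IndRep H ρ) := by
  classical
  have hp0 : (0:ℕ) < p := hp.pos
  have hord : orderOf ((g : G ⧸ H)) = p := by
    have hfin : Finite (G ⧸ H) := Nat.finite_of_card_ne_zero (by rw [hcard]; exact hp.pos.ne')
    have hdvd : orderOf ((g : G ⧸ H)) ∣ p := by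
      rw [← hcard]; exact orderOf_dvd_natCard _
    rcases (Nat.dvd_prime hp).1 hdvd with h1 | h1
    · exfalso
      have hq1 : ((g : G ⧸ H)) = 1 := orderOf_eq_one_iff.1 h1
      have hall1 : ∀ x : G ⧸ H, x = 1 := by
        intro x
        obtain ⟨k, hk⟩ := hgen x
        have hk' : ((g : G ⧸ H)) ^ k = x := hk
        rw [← hk', hq1, one_zpow]
      have hcard1 : Nat.card (G ⧸ H) = 1 := by
        have : Subsingleton (G ⧸ H) := ⟨fun a b => by rw [hall1 a, hall1 b]⟩
        exact Nat.card_eq_one_iff_unique.2 ⟨this, ⟨1⟩⟩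
      rw [hcard1] at hcard
      exact hp.one_lt.ne hcard
    · exact h1
  have hgpH : g ^ p ∈ H := by
    have h1 : ((g : G ⧸ H)) ^ p = 1 := by rw [← hord]; exact pow_orderOf_eq_one _
    rw [← QuotientGroup.mk_pow] at h1
    exact (QuotientGroup.eq_one_iff _).1 h1
  have hindex : ∀ x : G, ∃ i : Fin p, (g ^ (i : ℕ))⁻¹ * x ∈ H := by
    intro x
    obtain ⟨k, hk⟩ := hgen (x : G ⧸ H)
    have hk' : ((g : G ⧸ H)) ^ k = (x : G ⧸ H) := hk
    have hnn : 0 ≤ k % (p:ℤ) := Int.emod_nonneg k (by exact_mod_cast hp.pos.ne')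
    have hlt : k % (p:ℤ) < (p:ℤ) := Int.emod_lt_of_pos k (by exact_mod_cast hp.pos)
    refine ⟨⟨(k % (p:ℤ)).toNat, by omega⟩, ?_⟩
    have hzp : ((g : G ⧸ H)) ^ (k % ((orderOf ((g : G ⧸ H)) : ℕ) : ℤ)) = ((g : G ⧸ H)) ^ k :=
      zpow_mod_orderOf _ k
    rw [hord] at hzp
    have h2 : ((g : G ⧸ H)) ^ ((((k % (p:ℤ)).toNat : ℕ)) : ℤ) = (x : G ⧸ H) := by
      rw [Int.toNat_of_nonneg hnn, hzp, hk']
    rw [zpow_natCast, ← QuotientGroup.mk_pow] at h2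
    exact QuotientGroup.eq.1 h2
  have huniq : ∀ i j : Fin p, (g ^ (i : ℕ))⁻¹ * g ^ (j : ℕ) ∈ H → i = j := by
    intro i j hij
    have h1 : ((g ^ (i:ℕ) : G) : G ⧸ H) = ((g ^ (j:ℕ) : G) : G ⧸ H) := QuotientGroup.eq.2 hij
    rw [QuotientGroup.mk_pow, QuotientGroup.mk_pow] at h1
    have h2 : (i : ℕ) ≡ (j : ℕ) [MOD p] := by
      have h2' := pow_eq_pow_iff_modEq.1 h1
      rwa [hord] at h2'
    have h3 : (i:ℕ) % p = (j:ℕ) % p := h2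
    rw [Nat.mod_eq_of_lt i.2, Nat.mod_eq_of_lt j.2] at h3
    exact Fin.ext h3
  have hzero : ∀ f : ↥(IndSpace H ρ), (∀ i : Fin p, evmap H ρ (g ^ (i:ℕ)) f = 0) → f = 0 := by
    intro f hf
    ext x
    obtain ⟨i, hi⟩ := hindex x
    show (f : G → W) x = 0
    rw [ind_eval H ρ f hi]
    have h0 : (f : G → W) (g ^ (i:ℕ)) = 0 := hf i
    rw [h0, map_zero]
  set σ : Fin p → Representation ℂ ↥H W := fun i => RepConj ρ (g ^ (i:ℕ))⁻¹ with hσ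
  have hσirr : ∀ i, RepIrreducible (σ i) := fun i => RepConj_irreducible ρ hρ _
  have hσne : ∀ i j : Fin p, i ≠ j → ¬ RepIso (σ i) (σ j) := by
    intro i j hij hiso
    have h1 := hiso.conj (g ^ (j:ℕ))
    rw [hσ] at h1
    simp only at h1
    rw [RepConj_mul, RepConj_mul, inv_mul_cancel, RepConj_one] at h1
    have h2 : (g ^ (i:ℕ))⁻¹ * g ^ (j:ℕ) = g ^ (((j:ℕ):ℤ) + -((i:ℕ):ℤ)) := by
      rw [zpow_add, zpow_neg, zpow_natCast, zpow_natCast]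
      group
    rw [h2] at h1
    have h3 : ¬ ((p:ℤ) ∣ ((j:ℕ):ℤ) + -((i:ℕ):ℤ)) := by
      intro hd
      have hne : ((j:ℕ):ℤ) + -((i:ℕ):ℤ) ≠ 0 := by
        intro hc; exact hij (Fin.ext (by omega)).symm
      have hlt : (((j:ℕ):ℤ) + -((i:ℕ):ℤ)).natAbs < ((p:ℤ)).natAbs := by
        have hi := i.2
        have hj := j.2
        omega
      have h4 := Int.eq_zero_of_dvd_of_natAbs_lt_natAbs hd hlt
      exact hne h4
    exact conj_zpow_not_iso ρ hp hgpH hconj _ h3 h1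
  have hequiv : ∀ (i : Fin p) (h : ↥H) (f : ↥(IndSpace H ρ)),
      evmap H ρ (g ^ (i:ℕ)) (IndRep H ρ (h : G) f) = σ i h (evmap H ρ (g ^ (i:ℕ)) f) :=
    fun i h f => evmap_equivariant H ρ (g ^ (i:ℕ)) h f
  set S : ↥(IndSpace H ρ) → Finset (Fin p) :=
    fun f => Finset.univ.filter (fun i => evmap H ρ (g ^ (i:ℕ)) f ≠ 0) with hS
  have hSne : ∀ f : ↥(IndSpace H ρ), f ≠ 0 → (S f).Nonempty := by
    intro f hf
    rw [Finset.nonempty_iff_ne_empty]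
    intro hc
    apply hf
    apply hzero
    intro i
    by_contra h0
    have hmem : i ∈ S f := by rw [hS]; simp only [Finset.mem_filter]; exact ⟨Finset.mem_univ i, h0⟩
    rw [hc] at hmem
    exact absurd hmem (Finset.notMem_empty i)
  have hSmem : ∀ (f : ↥(IndSpace H ρ)) (i : Fin p), i ∉ S f → evmap H ρ (g ^ (i:ℕ)) f = 0 := by
    intro f i hi
    by_contra h0
    exact hi (by rw [hS]; simp only [Finset.mem_filter]; exact ⟨Finset.mem_univ i, h0⟩)
  have hSmem' : ∀ (f : ↥(IndSpace H ρ)) (i : Fin p), i ∈ S f → evmap H ρ (g ^ (i:ℕ)) f ≠ 0 := by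
    intro f i hi
    rw [hS] at hi
    simp only [Finset.mem_filter] at hi
    exact hi.2
  have hSin : ∀ (f : ↥(IndSpace H ρ)) (i : Fin p), evmap H ρ (g ^ (i:ℕ)) f ≠ 0 → i ∈ S f := by
    intro f i hi
    rw [hS]; exact Finset.mem_filter.2 ⟨Finset.mem_univ i, hi⟩
  constructor
  · have : Nontrivial W := hρ.1
    obtain ⟨w, w0⟩ := exists_ne (0 : W)
    refine ⟨mkfun H ρ 1 w, 0, fun hc => w0 ?_⟩
    have h1 := mkfun_eval H ρ 1 w
    rw [hc] at h1
    rw [← h1, map_zero]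
  intro U hU
  by_cases hU0 : U = ⊥
  · exact Or.inl hU0
  right
  obtain ⟨f₀, hf₀U, hf₀⟩ := (Submodule.ne_bot_iff U).1 hU0
  -- Step A
  have stepA : ∃ i : Fin p, ∃ f' ∈ U, f' ≠ 0 ∧ f' ∈ cpt H ρ (g ^ (i:ℕ)) := by
    have key : ∀ n : ℕ, ∀ f ∈ U, f ≠ 0 → (S f).card ≤ n →
        ∃ i : Fin p, ∃ f' ∈ U, f' ≠ 0 ∧ f' ∈ cpt H ρ (g ^ (i:ℕ)) := by
      intro n
      induction n with
      | zero =>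
        intro f hfU hf hcard0
        exfalso
        have h1 := hSne f hf
        rw [← Finset.card_pos] at h1
        omega
      | succ n ih =>
        intro f hfU hf hcardle
        by_cases hcard : (S f).card ≤ n
        · exact ih f hfU hf hcard
        obtain ⟨i, hiS⟩ := hSne f hf
        by_cases hone : ∀ j : Fin p, j ≠ i → evmap H ρ (g ^ (j:ℕ)) f = 0
        · refine ⟨i, f, hfU, hf, ?_⟩
          intro x hx
          obtain ⟨j, hj⟩ := hindex x
          have hji : j ≠ i := by
            intro hc
            rw [hc] at hj
            exact hx hj
          rw [ind_eval H ρ f hj]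
          have h0 : (f : G → W) (g ^ (j:ℕ)) = 0 := hone j hji
          rw [h0, map_zero]
        push_neg at hone
        obtain ⟨j, hji, hjne⟩ := hone
        have hjS : j ∈ S f := hSin f j hjne
        set Msupp : Submodule ℂ ↥(IndSpace H ρ) :=
          { carrier := {u | ∀ t : Fin p, t ∉ S f → evmap H ρ (g ^ (t:ℕ)) u = 0}
            add_mem' := by intro a b ha hb t ht; rw [map_add, ha t ht, hb t ht, add_zero]
            zero_mem' := by intro t ht; exact map_zero _
            smul_mem' := by intro c a ha t ht; rw [map_smul, ha t ht, smul_zero] } with hMsupp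
        set M : Submodule ℂ ↥(IndSpace H ρ) := U ⊓ Msupp with hM
        have hfM : f ∈ M := ⟨hfU, fun t ht => hSmem f t ht⟩
        by_cases hsmall : ∃ u ∈ M, u ≠ 0 ∧ (S u).card ≤ n
        · obtain ⟨u, huM, hu0, hcd⟩ := hsmall
          exact ih u huM.1 hu0 hcd
        push_neg at hsmall
        exfalso
        have hinj : ∀ t : Fin p, t ∈ S f → ∀ u ∈ M, evmap H ρ (g ^ (t:ℕ)) u = 0 → u = 0 := by
          intro t ht u huM hu0
          by_contra h0
          have hlarge := hsmall u huM h0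
          have hsub : S u ⊆ S f \ {t} := by
            intro s hs
            rw [Finset.mem_sdiff]
            constructor
            · by_contra hns
              exact hSmem' u s hs (huM.2 s hns)
            · rw [Finset.mem_singleton]
              intro hc
              rw [hc] at hs
              exact hSmem' u t hs hu0
          have hc1 := Finset.card_le_card hsub
          rw [Finset.card_sdiff_of_subset (by simpa using ht), Finset.card_singleton] at hc1
          omega
        have hMinv : ∀ (h : ↥H), ∀ u ∈ M, IndRep H ρ ((h:G)) u ∈ M := by
          intro h u huM
          refine ⟨hU _ u huM.1, fun t ht => ?_⟩
          rw [hequiv t h u, huM.2 t ht, map_zero]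
        have hbij : ∀ t : Fin p, t ∈ S f →
            Function.Bijective ((evmap H ρ (g ^ (t:ℕ))).comp M.subtype) := by
          intro t ht
          constructor
          · intro a b hab
            have h1 : evmap H ρ (g ^ (t:ℕ)) ((a : ↥(IndSpace H ρ)) - b) = 0 := by
              rw [map_sub, sub_eq_zero]
              exact hab
            have h2 := hinj t ht _ (M.sub_mem a.2 b.2) h1
            exact Subtype.ext (sub_eq_zero.1 h2)
          · have hRinv : RepInvariant (σ t) (Submodule.map (evmap H ρ (g ^ (t:ℕ))) M) := by
              intro h w hw
              obtain ⟨u, huM, rfl⟩ := hw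
              exact ⟨IndRep H ρ (h:G) u, hMinv h u huM, hequiv t h u⟩
            have hR : Submodule.map (evmap H ρ (g ^ (t:ℕ))) M = ⊤ := by
              rcases (hσirr t).2 (Submodule.map (evmap H ρ (g ^ (t:ℕ))) M) hRinv with hbot | htop
              · exfalso
                have hm : evmap H ρ (g ^ (t:ℕ)) f ∈ Submodule.map (evmap H ρ (g ^ (t:ℕ))) M :=
                  ⟨f, hfM, rfl⟩
                rw [hbot] at hm
                exact hSmem' f t ht ((Submodule.mem_bot ℂ).1 hm)
              · exact htop
            intro w
            have hw : w ∈ Submodule.map (evmap H ρ (g ^ (t:ℕ))) M := by rw [hR]; trivial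
            obtain ⟨u, huM, hu⟩ := hw
            exact ⟨⟨u, huM⟩, hu⟩
        apply hσne j i hji
        refine ⟨(LinearEquiv.ofBijective _ (hbij j hjS)).symm.trans
          (LinearEquiv.ofBijective _ (hbij i hiS)), ?_⟩
        intro h w
        obtain ⟨u, hu⟩ : ∃ u : ↥M, LinearEquiv.ofBijective _ (hbij j hjS) u = w :=
          ⟨(LinearEquiv.ofBijective _ (hbij j hjS)).symm w,
            (LinearEquiv.ofBijective _ (hbij j hjS)).apply_symm_apply w⟩
        have hevj : evmap H ρ (g ^ (j:ℕ)) (u : ↥(IndSpace H ρ)) = w := by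
          rw [← hu, LinearEquiv.ofBijective_apply]
          rfl
        have hj1 : LinearEquiv.ofBijective _ (hbij j hjS)
            (⟨IndRep H ρ ((h:G)) u, hMinv h u u.2⟩ : ↥M) = σ j h w := by
          rw [LinearEquiv.ofBijective_apply]
          show evmap H ρ (g ^ (j:ℕ)) (IndRep H ρ ((h:G)) (u : ↥(IndSpace H ρ))) = σ j h w
          rw [hequiv, hevj]
        have hstep : ((LinearEquiv.ofBijective _ (hbij j hjS)).symm.trans
            (LinearEquiv.ofBijective _ (hbij i hiS))) (σ j h w)
            = LinearEquiv.ofBijective _ (hbij i hiS)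
                (⟨IndRep H ρ ((h:G)) u, hMinv h u u.2⟩ : ↥M) := by
          rw [← hj1, LinearEquiv.trans_apply, LinearEquiv.symm_apply_apply]
        rw [hstep, LinearEquiv.ofBijective_apply]
        have hi1 : ((evmap H ρ (g ^ (i:ℕ))).comp M.subtype)
              (⟨IndRep H ρ ((h:G)) u, hMinv h u u.2⟩ : ↥M)
            = evmap H ρ (g ^ (i:ℕ)) (IndRep H ρ ((h:G)) (u : ↥(IndSpace H ρ))) := rfl
        rw [hi1, hequiv]
        congr 1
        rw [← hu, LinearEquiv.trans_apply, LinearEquiv.symm_apply_apply,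
          LinearEquiv.ofBijective_apply]
        rfl
    exact key (S f₀).card f₀ hf₀U hf₀ le_rfl
  obtain ⟨i0, f', hf'U, hf'0, hf'c⟩ := stepA
  -- Step B
  have stepB : ∀ i : Fin p, (∃ f' ∈ U, f' ≠ 0 ∧ f' ∈ cpt H ρ (g ^ (i:ℕ))) →
      cpt H ρ (g ^ (i:ℕ)) ≤ U := by
    rintro i ⟨f1, hf1U, hf10, hf1c⟩
    have hNinv : ∀ (h : ↥H), ∀ u ∈ U ⊓ cpt H ρ (g ^ (i:ℕ)),
        IndRep H ρ ((h:G)) u ∈ U ⊓ cpt H ρ (g ^ (i:ℕ)) := by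
      rintro h u ⟨huU, huc⟩
      refine ⟨hU _ u huU, ?_⟩
      have h1 := indRep_cpt H ρ huc (h:G)
      have h2 : cpt H ρ ((h:G) * g ^ (i:ℕ)) = cpt H ρ (g ^ (i:ℕ)) := by
        apply cpt_congr
        have h3 : ((h:G) * g ^ (i:ℕ))⁻¹ * g ^ (i:ℕ)
            = (g ^ (i:ℕ))⁻¹ * (h:G)⁻¹ * ((g ^ (i:ℕ))⁻¹)⁻¹ := by group
        rw [h3]
        exact Subgroup.Normal.conj_mem ‹H.Normal› _ (inv_mem h.2) _
      rwa [h2] at h1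
    have hev : evmap H ρ (g ^ (i:ℕ)) f1 ≠ 0 := fun hc => hf10 (cpt_eq_zero H ρ hf1c hc)
    have hRinv : RepInvariant (σ i)
        (Submodule.map (evmap H ρ (g ^ (i:ℕ))) (U ⊓ cpt H ρ (g ^ (i:ℕ)))) := by
      intro h w hw
      obtain ⟨u, huM, rfl⟩ := hw
      exact ⟨IndRep H ρ (h:G) u, hNinv h u huM, hequiv i h u⟩
    have hR : Submodule.map (evmap H ρ (g ^ (i:ℕ))) (U ⊓ cpt H ρ (g ^ (i:ℕ))) = ⊤ := by
      rcases (hσirr i).2 (Submodule.map (evmap H ρ (g ^ (i:ℕ))) (U ⊓ cpt H ρ (g ^ (i:ℕ)))) hRinv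
        with hbot | htop
      · exfalso
        have hm : evmap H ρ (g ^ (i:ℕ)) f1
            ∈ Submodule.map (evmap H ρ (g ^ (i:ℕ))) (U ⊓ cpt H ρ (g ^ (i:ℕ))) :=
          ⟨f1, ⟨hf1U, hf1c⟩, rfl⟩
        rw [hbot] at hm
        exact hev ((Submodule.mem_bot ℂ).1 hm)
      · exact htop
    intro u huc
    have hw : evmap H ρ (g ^ (i:ℕ)) u
        ∈ Submodule.map (evmap H ρ (g ^ (i:ℕ))) (U ⊓ cpt H ρ (g ^ (i:ℕ))) := by
      rw [hR]; trivial
    obtain ⟨v, hvN, hv⟩ := hw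
    have hsub : u - v ∈ cpt H ρ (g ^ (i:ℕ)) := sub_mem huc hvN.2
    have h0 : u - v = 0 := by
      apply cpt_eq_zero H ρ hsub
      show evmap H ρ (g ^ (i:ℕ)) (u - v) = 0
      rw [map_sub, hv, sub_self]
    have huv : u = v := by rwa [sub_eq_zero] at h0
    rw [huv]
    exact hvN.1
  -- Step C
  have stepC : ∀ k : ℕ, cpt H ρ (g ^ ((i0:ℕ) + k)) ≤ U := by
    intro k
    induction k with
    | zero => simpa using stepB i0 ⟨f', hf'U, hf'0, hf'c⟩
    | succ k ih =>
      intro u huc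
      have h1 : IndRep H ρ g⁻¹ u ∈ cpt H ρ (g⁻¹ * g ^ ((i0:ℕ) + (k+1))) := indRep_cpt H ρ huc g⁻¹
      have h2 : g⁻¹ * g ^ ((i0:ℕ) + (k + 1)) = g ^ ((i0:ℕ) + k) := by
        have : (i0:ℕ) + (k + 1) = ((i0:ℕ) + k) + 1 := by omega
        rw [this, pow_succ']
        exact inv_mul_cancel_left g _
      rw [h2] at h1
      have h3 := hU g _ (ih h1)
      have h4 : IndRep H ρ g (IndRep H ρ g⁻¹ u) = u := by
        calc IndRep H ρ g (IndRep H ρ g⁻¹ u) = (IndRep H ρ g * IndRep H ρ g⁻¹) u := rfl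
        _ = IndRep H ρ (g * g⁻¹) u := by rw [← map_mul]
        _ = u := by rw [mul_inv_cancel, map_one]; rfl
      rwa [h4] at h3
  -- Step D
  have stepD : ∀ j : Fin p, cpt H ρ (g ^ (j:ℕ)) ≤ U := by
    intro j
    have hi0 := i0.2
    have hk : (i0:ℕ) + (p + (j:ℕ) - (i0:ℕ)) = p + (j:ℕ) := by omega
    have h1 := stepC (p + (j:ℕ) - (i0:ℕ))
    rw [hk] at h1
    have h2 : cpt H ρ (g ^ (p + (j:ℕ))) = cpt H ρ (g ^ (j:ℕ)) := by
      apply cpt_congr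
      have h3 : (g ^ (p + (j:ℕ)))⁻¹ * g ^ (j:ℕ) = (g ^ p)⁻¹ := by
        rw [pow_add]; group
      rw [h3]
      exact inv_mem hgpH
    rwa [h2] at h1
  -- conclude
  rw [eq_top_iff]
  intro f _
  have hsum : f = ∑ t : Fin p, piece H ρ (g ^ (t:ℕ)) f := by
    ext x
    show (f : G → W) x = ((∑ t : Fin p, piece H ρ (g ^ (t:ℕ)) f : ↥(IndSpace H ρ)) : G → W) x
    obtain ⟨t₀, ht₀⟩ := hindex x
    have hc : ((∑ t : Fin p, piece H ρ (g ^ (t:ℕ)) f : ↥(IndSpace H ρ)) : G → W) x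
        = ∑ t : Fin p, ((piece H ρ (g ^ (t:ℕ)) f : ↥(IndSpace H ρ)) : G → W) x := by
      rw [Submodule.coe_sum]
      exact Finset.sum_apply x Finset.univ _
    rw [hc]
    rw [Finset.sum_eq_single_of_mem t₀ (Finset.mem_univ t₀)]
    · rw [piece_apply, if_pos ht₀]
    · intro t _ htne
      rw [piece_apply, if_neg]
      intro hmem
      apply htne
      apply huniq t t₀
      have h5 : (g ^ (t:ℕ))⁻¹ * g ^ (t₀:ℕ) = ((g ^ (t:ℕ))⁻¹ * x) * ((g ^ (t₀:ℕ))⁻¹ * x)⁻¹ := by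
        group
      rw [h5]
      exact mul_mem hmem (inv_mem ht₀)
  rw [hsum]
  exact Submodule.sum_mem U (fun t _ => stepD t (piece_mem_cpt H ρ _ f))
end

section
/- Let G be a finite group and H a normal subgroup with G/H abelian. Let π be an irreducible complex representation of G and ρ an irreducible constituent of Res^G_H π. Then any two irreducible representations π₁, π₂ of G both containing ρ in their restriction to H differ by a twist: π₂ ≅ π₁ ⊗ ω for some character ω of G/H. -/
noncomputable section Aux

private theorem rep_mul_apply {G V : Type*} [Group G] [AddCommGroup V] [Module ℂ V]
    (σ : Representation ℂ G V) (a b : G) (v : V) : σ a (σ b v) = σ (a * b) v := by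
  rw [map_mul]; rfl

private theorem aux_findim {G : Type} [Group G] [Finite G] {V : Type} [AddCommGroup V]
    [Module ℂ V] (π : Representation ℂ G V) (h : RepIrreducible π) :
    FiniteDimensional ℂ V := by
  haveI := h.1
  obtain ⟨v, hv⟩ := exists_ne (0 : V)
  set p := Submodule.span ℂ (Set.range fun g => π g v) with hp
  have hinv : RepInvariant π p := by
    intro g w hw
    have hle : Submodule.map (π g) p ≤ p := by
      rw [hp, Submodule.map_span, Submodule.span_le]
      rintro _ ⟨_, ⟨g', rfl⟩, rfl⟩
      exact Submodule.subset_span ⟨g * g', (rep_mul_apply π g g' v).symm⟩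
    exact hle ⟨w, hw, rfl⟩
  have hne : p ≠ ⊥ := by
    intro hbot
    have hvmem : v ∈ p := Submodule.subset_span ⟨1, by simp⟩
    rw [hbot, Submodule.mem_bot] at hvmem
    exact hv hvmem
  have htop : p = ⊤ := (h.2 p hinv).resolve_left hne
  have hfd : FiniteDimensional ℂ ↥p := FiniteDimensional.span_of_finite ℂ (Set.finite_range _)
  rw [htop] at hfd
  exact Submodule.topEquiv.finiteDimensional

variable {G : Type} [Group G] (H : Subgroup G) [H.Normal]
  {V₁ V₂ : Type} [AddCommGroup V₁] [Module ℂ V₁] [AddCommGroup V₂] [Module ℂ V₂]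

/-- The space of `H`-intertwiners from `π₁` to `π₂`. -/
private def HomH (π₁ : Representation ℂ G V₁) (π₂ : Representation ℂ G V₂) :
    Submodule ℂ (V₁ →ₗ[ℂ] V₂) where
  carrier := {f | ∀ h ∈ H, ∀ v, f (π₁ h v) = π₂ h (f v)}
  add_mem' := by intro a b ha hb h hh v; simp [ha h hh v, hb h hh v]
  zero_mem' := by intro h hh v; simp
  smul_mem' := by intro c f hf h hh v; simp [hf h hh v]

/-- The action of `G` on `H`-intertwiners. -/
private def tauRep (π₁ : Representation ℂ G V₁) (π₂ : Representation ℂ G V₂) :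
    Representation ℂ G ↥(HomH H π₁ π₂) where
  toFun g :=
    { toFun := fun f => ⟨π₂ g ∘ₗ f.1 ∘ₗ π₁ g⁻¹, by
        intro h hh v
        have hconj : g⁻¹ * h * g ∈ H := by
          have := ‹H.Normal›.conj_mem h hh g⁻¹
          simpa using this
        simp only [LinearMap.comp_apply]
        have e1 : π₁ g⁻¹ (π₁ h v) = π₁ (g⁻¹ * h * g) (π₁ g⁻¹ v) := by
          rw [rep_mul_apply, rep_mul_apply]; group
        rw [e1, f.2 (g⁻¹ * h * g) hconj, rep_mul_apply, rep_mul_apply]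
        congr 2
        group⟩
      map_add' := by intro a b; apply Subtype.ext; ext v; simp
      map_smul' := by intro c a; apply Subtype.ext; ext v; simp }
  map_one' := by
    refine LinearMap.ext fun f => Subtype.ext (LinearMap.ext fun v => ?_)
    simp
  map_mul' a b := by
    refine LinearMap.ext fun f => Subtype.ext (LinearMap.ext fun v => ?_)
    simp only [LinearMap.coe_mk, AddHom.coe_mk, LinearMap.comp_apply, Module.End.mul_apply]
    rw [mul_inv_rev, ← rep_mul_apply π₁, rep_mul_apply π₂]

end Aux


/-- For a finite group `G`, `H ⊴ G` with abelian quotient and `ρ` an irreducible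
representation of `H`, any two irreducible representations of `G` containing `ρ` in their
restriction to `H` differ by a twist by a character of `G/H`. -/
theorem statement7 {G : Type} [Group G] [Finite G] (H : Subgroup G) [H.Normal]
    (hab : ∀ a b : G, a * b * a⁻¹ * b⁻¹ ∈ H)
    {W : Type} [AddCommGroup W] [Module ℂ W]
    (ρ : Representation ℂ ↥H W) (hρ : RepIrreducible ρ)
    {V₁ : Type} [AddCommGroup V₁] [Module ℂ V₁]
    (π₁ : Representation ℂ G V₁) (hπ₁ : RepIrreducible π₁)
    (h₁ : RepContains (RepRes H π₁) ρ)
    {V₂ : Type} [AddCommGroup V₂] [Module ℂ V₂]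
    (π₂ : Representation ℂ G V₂) (hπ₂ : RepIrreducible π₂)
    (h₂ : RepContains (RepRes H π₂) ρ) :
    ∃ ω : G →* ℂˣ, (∀ h ∈ H, ω h = 1) ∧ RepIso π₂ (TwistRep π₁ ω) := by
  classical
  haveI := hπ₁.1
  haveI := hπ₂.1
  haveI := hρ.1
  haveI : FiniteDimensional ℂ V₁ := aux_findim π₁ hπ₁
  haveI : FiniteDimensional ℂ V₂ := aux_findim π₂ hπ₂
  obtain ⟨j₁, hj₁inj, hj₁⟩ := h₁
  obtain ⟨j₂, hj₂inj, hj₂⟩ := h₂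
  haveI : Fintype ↥H := Fintype.ofFinite _
  have hj₁' : ∀ (h : ↥H) (w : W), j₁ (ρ h w) = π₁ (h : G) (j₁ w) := fun h w => hj₁ h w
  have hj₂' : ∀ (h : ↥H) (w : W), j₂ (ρ h w) = π₂ (h : G) (j₂ w) := fun h w => hj₂ h w
  obtain ⟨p, hp⟩ := j₁.exists_leftInverse_of_injective (LinearMap.ker_eq_bot.2 hj₁inj)
  have hp' : ∀ w, p (j₁ w) = w := fun w => congrArg (fun t => t w) hp
  set c0 : ℂ := ((Fintype.card ↥H : ℂ))⁻¹ with hc0def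
  have hcard : ((Fintype.card ↥H : ℂ)) ≠ 0 := by
    exact_mod_cast Fintype.card_ne_zero
  set P : V₁ →ₗ[ℂ] W := c0 • ∑ h : ↥H, ρ h ∘ₗ p ∘ₗ π₁ ((h : G))⁻¹ with hPdef
  have hterm : ∀ (h : ↥H) (w : W), (ρ h ∘ₗ p ∘ₗ π₁ ((h : G))⁻¹) (j₁ w) = w := by
    intro h w
    have e1 : π₁ ((h : G))⁻¹ (j₁ w) = j₁ (ρ h⁻¹ w) := by
      rw [hj₁' h⁻¹ w]; norm_cast
    simp only [LinearMap.comp_apply, e1, hp', rep_mul_apply, mul_inv_cancel, map_one,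
      Module.End.one_apply]
  have hPj : ∀ w, P (j₁ w) = w := by
    intro w
    rw [hPdef]
    simp only [LinearMap.smul_apply, LinearMap.sum_apply]
    rw [Finset.sum_congr rfl fun h _ => hterm h w]
    rw [Finset.sum_const, Finset.card_univ, ← Nat.cast_smul_eq_nsmul ℂ, smul_smul,
      hc0def, inv_mul_cancel₀ hcard, one_smul]
  have hPint : ∀ (h₀ : ↥H) (v : V₁), P (π₁ (h₀ : G) v) = ρ h₀ (P v) := by
    intro h₀ v
    rw [hPdef]
    simp only [LinearMap.smul_apply, LinearMap.sum_apply, map_smul]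
    congr 1
    rw [map_sum]
    refine (Fintype.sum_equiv (Equiv.mulLeft h₀) _ _ ?_).symm
    intro k
    simp only [Equiv.coe_mulLeft, LinearMap.comp_apply]
    have e1 : π₁ (((h₀ * k : ↥H) : G))⁻¹ (π₁ (h₀ : G) v) = π₁ (((k : G))⁻¹) v := by
      rw [rep_mul_apply]
      congr 1
      push_cast
      group
    rw [e1, ← rep_mul_apply ρ h₀ k]
  have hfmem : j₂ ∘ₗ P ∈ HomH H π₁ π₂ := by
    intro h hh v
    simp only [LinearMap.comp_apply]
    rw [show h = ((⟨h, hh⟩ : ↥H) : G) from rfl, hPint ⟨h, hh⟩ v, hj₂' ⟨h, hh⟩]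
  obtain ⟨w0, hw0⟩ := exists_ne (0 : W)
  have hfne : (⟨j₂ ∘ₗ P, hfmem⟩ : ↥(HomH H π₁ π₂)) ≠ 0 := by
    intro hzero
    have hz2 : (j₂ ∘ₗ P) (j₁ w0) = 0 := by
      rw [Subtype.ext_iff] at hzero
      simp only [Submodule.coe_zero] at hzero
      rw [hzero]; rfl
    rw [LinearMap.comp_apply, hPj] at hz2
    exact hw0 (hj₂inj (by simpa using hz2))
  set M := HomH H π₁ π₂ with hMdef
  set τ := tauRep H π₁ π₂ with hτdef
  have hτapp : ∀ (g : G) (f : ↥M) (v : V₁), ((τ g f : ↥M) : V₁ →ₗ[ℂ] V₂) v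
      = π₂ g ((f : V₁ →ₗ[ℂ] V₂) (π₁ g⁻¹ v)) := fun g f v => rfl
  haveI : Nontrivial ↥M := nontrivial_of_ne _ _ hfne
  have tauH : ∀ h ∈ H, ∀ f : ↥M, τ h f = f := by
    intro h hh f
    apply Subtype.ext; apply LinearMap.ext; intro v
    rw [hτapp]
    have h2 := f.2 h⁻¹ (inv_mem hh) v
    rw [h2, rep_mul_apply, mul_inv_cancel, map_one]; rfl
  have tcomm : ∀ (a b : G) (f : ↥M), τ a (τ b f) = τ b (τ a f) := by
    intro a b f
    rw [rep_mul_apply τ, rep_mul_apply τ]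
    have e1 : a * b = (a * b * a⁻¹ * b⁻¹) * (b * a) := by group
    rw [e1, ← rep_mul_apply τ, tauH _ (hab a b)]
  set S : Set (Submodule ℂ ↥M) := {N | N ≠ ⊥ ∧ ∀ g : G, ∀ x ∈ N, τ g x ∈ N} with hSdef
  have hStop : (⊤ : Submodule ℂ ↥M) ∈ S := by
    constructor
    · intro htb
      obtain ⟨x, y, hxy⟩ := exists_pair_ne ↥M
      refine hxy ?_
      have hx : x ∈ (⊥ : Submodule ℂ ↥M) := htb ▸ Submodule.mem_top
      have hy : y ∈ (⊥ : Submodule ℂ ↥M) := htb ▸ Submodule.mem_top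
      rw [Submodule.mem_bot] at hx hy
      rw [hx, hy]
    · intro g x _; exact Submodule.mem_top
  have hSim : ((fun N : Submodule ℂ ↥M => Module.finrank ℂ ↥N) '' S).Nonempty :=
    ⟨_, ⟨⊤, hStop, rfl⟩⟩
  obtain ⟨N, hNS, hNrk⟩ := Nat.sInf_mem hSim
  have hmin : ∀ N₀ ∈ S, Module.finrank ℂ ↥N ≤ Module.finrank ℂ ↥N₀ := by
    intro N₀ hN₀
    change Module.finrank ℂ ↥N = _ at hNrk
    rw [hNrk]
    exact Nat.sInf_le ⟨N₀, hN₀, rfl⟩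
  have hscal : ∀ g : G, ∃ c : ℂ, ∀ x ∈ N, τ g x = c • x := by
    intro g
    haveI : Nontrivial ↥N := Submodule.nontrivial_iff_ne_bot.2 hNS.1
    set T : Module.End ℂ ↥N := (τ g).restrict (fun x hx => hNS.2 g x hx) with hTdef
    obtain ⟨c, hc⟩ := Module.End.exists_eigenvalue (K := ℂ) (V := ↥N) T
    obtain ⟨x0, hx0⟩ := hc.exists_hasEigenvector
    have hx0eig : T x0 = c • x0 := hx0.apply_eq_smul
    have hx0ne : x0 ≠ 0 := hx0.2
    refine ⟨c, ?_⟩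
    set E : Submodule ℂ ↥M :=
      { carrier := {x | x ∈ N ∧ τ g x = c • x}
        add_mem' := by
          rintro a b ⟨haN, haE⟩ ⟨hbN, hbE⟩
          exact ⟨N.add_mem haN hbN, by rw [map_add, haE, hbE, smul_add]⟩
        zero_mem' := ⟨N.zero_mem, by rw [map_zero, smul_zero]⟩
        smul_mem' := by
          rintro t a ⟨haN, haE⟩
          exact ⟨N.smul_mem t haN, by rw [map_smul, haE, smul_comm]⟩ } with hEdef
    have hx0E : (x0 : ↥M) ∈ E := by
      constructor
      · exact x0.2
      · have h3 : ((T x0 : ↥N) : ↥M) = ((c • x0 : ↥N) : ↥M) := by rw [hx0eig]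
        rw [hTdef] at h3
        simpa [LinearMap.restrict_apply] using h3
    have hES : E ∈ S := by
      constructor
      · intro hEb
        apply hx0ne
        have h4 : (x0 : ↥M) ∈ (⊥ : Submodule ℂ ↥M) := hEb ▸ hx0E
        rw [Submodule.mem_bot] at h4
        exact Subtype.ext h4
      · rintro g₀ x ⟨hxN, hxE⟩
        exact ⟨hNS.2 g₀ x hxN, by rw [← tcomm, hxE, map_smul]⟩
    have hEN : E ≤ N := fun x hx => hx.1
    have hENeq : E = N := Submodule.eq_of_le_of_finrank_le hEN (hmin E hES)
    intro x hx
    have h5 : x ∈ E := hENeq ▸ hx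
    exact h5.2
  obtain ⟨F1, hF1N, hF1ne⟩ := Submodule.exists_mem_ne_zero_of_ne_bot hNS.1
  set cf : G → ℂ := fun g => Classical.choose (hscal g) with hcfdef
  have hcf : ∀ g : G, τ g F1 = cf g • F1 := fun g =>
    Classical.choose_spec (hscal g) F1 hF1N
  have uniq : ∀ c c₀ : ℂ, c • F1 = c₀ • F1 → c = c₀ := by
    intro c c₀ h
    exact smul_left_injective ℂ hF1ne h
  have hτinv : ∀ (g : G) (x : ↥M), τ g⁻¹ (τ g x) = x := by
    intro g x
    rw [rep_mul_apply τ, inv_mul_cancel, map_one]; rfl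
  have hcf0 : ∀ g : G, cf g ≠ 0 := by
    intro g hg
    apply hF1ne
    have h1 : τ g F1 = 0 := by rw [hcf g, hg, zero_smul]
    have h2 := hτinv g F1
    rw [h1, map_zero] at h2
    exact h2.symm
  set ω : G →* ℂˣ :=
    { toFun := fun g => Units.mk0 (cf g) (hcf0 g)
      map_one' := by
        apply Units.ext
        show cf 1 = 1
        apply uniq
        rw [← hcf 1, one_smul, map_one]; rfl
      map_mul' := by
        intro a b
        apply Units.ext
        show cf (a * b) = cf a * cf b
        apply uniq
        rw [← hcf (a * b), ← rep_mul_apply τ, hcf b, map_smul, hcf a, smul_smul,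
          mul_comm] } with hωdef
  have hωH : ∀ h ∈ H, ω h = 1 := by
    intro h hh
    apply Units.ext
    show cf h = 1
    apply uniq
    rw [← hcf h, one_smul, tauH h hh]
  set f : V₁ →ₗ[ℂ] V₂ := (F1 : V₁ →ₗ[ℂ] V₂) with hfdef
  have hfne2 : f ≠ 0 := by
    intro h
    exact hF1ne (Subtype.ext h)
  have hkey : ∀ (g : G) (v : V₁), π₂ g (f v) = cf g • f (π₁ g v) := by
    intro g v
    have h6 := congrArg (fun x : ↥M => ((x : V₁ →ₗ[ℂ] V₂)) (π₁ g v)) (hcf g)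
    rw [hτapp] at h6
    rw [rep_mul_apply π₁, inv_mul_cancel, map_one] at h6
    simpa using h6
  have hkey2 : ∀ (g : G) (v : V₁), f (π₁ g v) = (cf g)⁻¹ • π₂ g (f v) := by
    intro g v
    rw [hkey g v, smul_smul, inv_mul_cancel₀ (hcf0 g), one_smul]
  have hkerinv : RepInvariant π₁ (LinearMap.ker f) := by
    intro g v hv
    rw [LinearMap.mem_ker] at hv ⊢
    rw [hkey2 g v, hv, map_zero, smul_zero]
  have hker : LinearMap.ker f = ⊥ := by
    rcases hπ₁.2 _ hkerinv with h | h
    · exact h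
    · exact absurd (LinearMap.ker_eq_top.1 h) hfne2
  have hrginv : RepInvariant π₂ (LinearMap.range f) := by
    rintro g _ ⟨v, rfl⟩
    rw [hkey g v]
    exact Submodule.smul_mem _ _ ⟨π₁ g v, rfl⟩
  have hrg : LinearMap.range f = ⊤ := by
    rcases hπ₂.2 _ hrginv with h | h
    · exact absurd (LinearMap.range_eq_bot.1 h) hfne2
    · exact h
  set e₁ : V₁ ≃ₗ[ℂ] V₂ := LinearEquiv.ofBijective f
    ⟨LinearMap.ker_eq_bot.1 hker, LinearMap.range_eq_top.1 hrg⟩ with he₁def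
  have he₁app : ∀ v, e₁ v = f v := fun v => rfl
  refine ⟨ω, hωH, e₁.symm, ?_⟩
  intro g v
  apply e₁.injective
  rw [LinearEquiv.apply_symm_apply]
  show π₂ g v = e₁ (TwistRep π₁ ω g (e₁.symm v))
  have htw : TwistRep π₁ ω g (e₁.symm v) = cf g • π₁ g (e₁.symm v) := rfl
  rw [htw, he₁app, map_smul, ← hkey g (e₁.symm v), ← he₁app, LinearEquiv.apply_symm_apply]
end

section
/- Let G be a group, H ⊴ G of finite index, and ρ an irreducible representation of H. Then Ind^G_H ρ has finite length, and every irreducible representation of G containing ρ in its restriction to H appears as a subrepresentation of Ind^G_H ρ. -/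
theorem aux_chainBound {α : Type*} [CompleteLattice α] [IsModularLattice α]
    (T : Set α) (hT : ∀ s ∈ T, ∀ t ∈ T, s ⊔ t ∈ T) :
    ∀ (n : ℕ) (S : Fin n → α), (∀ i, S i ∈ T) →
      (∀ i, ∀ t ∈ T, S i ≤ t ∨ S i ⊓ t = ⊥) →
      ∀ (b : α), b ⊔ (⨆ i, S i) = ⊤ →
      ∀ (m : ℕ) (c : Fin m → α), (∀ j, c j ∈ T) → StrictMono c →
        (∀ j, b ≤ c j) → m ≤ n + 1 := by
  intro n
  induction n with
  | zero =>
    intro S _ _ b hb m c _ hmono hbc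
    by_contra hlt
    push_neg at hlt
    have h2 : 2 ≤ m := hlt
    have hbtop : b = ⊤ := by simpa using hb
    have h01 : c ⟨0, by omega⟩ < c ⟨1, by omega⟩ := hmono (by simp [Fin.lt_def])
    have h0top : c ⟨0, by omega⟩ = ⊤ := top_le_iff.mp (hbtop ▸ hbc ⟨0, by omega⟩)
    exact not_top_lt (h0top ▸ h01)
  | succ n ih =>
    intro S hmem hsimp b hb m c hcT hmono hbc
    rcases Nat.lt_or_ge m 2 with h | h
    · omega
    obtain ⟨m', rfl⟩ : ∃ m', m = m' + 2 := ⟨m - 2, by omega⟩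
    have hlt : c ⟨m', by omega⟩ < c ⟨m' + 1, by omega⟩ := hmono (by simp [Fin.lt_def])
    have hne : c ⟨m', by omega⟩ ≠ ⊤ := ne_top_of_lt hlt
    have hex : ∃ i, ¬ S i ≤ c ⟨m', by omega⟩ := by
      by_contra hall
      push_neg at hall
      exact hne (top_le_iff.mp (hb ▸ sup_le (hbc ⟨m', by omega⟩) (iSup_le hall)))
    obtain ⟨i, hi⟩ := hex
    have hinf : S i ⊓ c ⟨m', by omega⟩ = ⊥ := (hsimp i _ (hcT ⟨m', by omega⟩)).resolve_left hi
    have hb' : (b ⊔ S i) ⊔ (⨆ j : Fin n, S (i.succAbove j)) = ⊤ := by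
      rw [sup_assoc]
      have hSsup : S i ⊔ (⨆ j : Fin n, S (i.succAbove j)) = ⨆ k, S k := by
        apply le_antisymm
        · exact sup_le (le_iSup S i) (iSup_le fun j => le_iSup S _)
        · refine iSup_le fun k => ?_
          rcases eq_or_ne k i with rfl | hk
          · exact le_sup_left
          · obtain ⟨j, rfl⟩ := Fin.exists_succAbove_eq hk
            exact le_sup_of_le_right (le_iSup (fun j => S (i.succAbove j)) j)
      rw [hSsup, hb]
    have hle : ∀ j : Fin (m' + 1), c j.castSucc ≤ c ⟨m', by omega⟩ := by
      intro j
      exact hmono.monotone (by simp only [Fin.le_def, Fin.coe_castSucc]; omega)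
    have key : m' + 1 ≤ n + 1 := by
      refine ih (fun j => S (i.succAbove j)) (fun j => hmem _) (fun j => hsimp _)
        (b ⊔ S i) hb' (m' + 1) (fun j => c j.castSucc ⊔ S i)
        (fun j => hT _ (hcT _) _ (hmem i)) ?_ (fun j => sup_le_sup (hbc _) le_rfl)
      intro j k hjk
      have h1 : c j.castSucc < c k.castSucc := hmono (Fin.castSucc_lt_castSucc_iff.mpr hjk)
      refine lt_of_le_of_ne (sup_le_sup_right h1.le _) fun he => ?_
      have hk2 : c k.castSucc ≤ c j.castSucc ⊔ S i := le_trans le_sup_left (le_of_eq he.symm)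
      have hzero : S i ⊓ c k.castSucc = ⊥ :=
        le_bot_iff.mp (hinf ▸ inf_le_inf_left _ (hle k))
      have : c k.castSucc = c j.castSucc := by
        conv_lhs => rw [← inf_eq_right.mpr hk2]
        rw [sup_inf_assoc_of_le _ h1.le, hzero, sup_bot_eq]
      exact h1.ne' this
    omega

section AuxRep

open Submodule

variable {G : Type*} [Group G]

theorem aux_inv_sup {V : Type*} [AddCommGroup V] [Module ℂ V] {K : Type*} [Group K]
    {π : Representation ℂ K V} {p q : Submodule ℂ V}
    (hp : RepInvariant π p) (hq : RepInvariant π q) : RepInvariant π (p ⊔ q) := by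
  intro g v hv
  rcases Submodule.mem_sup.mp hv with ⟨a, ha, b, hb, rfl⟩
  rw [map_add]
  exact Submodule.add_mem_sup (hp g a ha) (hq g b hb)

theorem aux_inv_inf {V : Type*} [AddCommGroup V] [Module ℂ V] {K : Type*} [Group K]
    {π : Representation ℂ K V} {p q : Submodule ℂ V}
    (hp : RepInvariant π p) (hq : RepInvariant π q) : RepInvariant π (p ⊓ q) :=
  fun g v hv => ⟨hp g v hv.1, hq g v hv.2⟩

theorem aux_conj_irred {W : Type*} [AddCommGroup W] [Module ℂ W] {H : Subgroup G}
    [hH : H.Normal] {ρ : Representation ℂ ↥H W} (hρ : RepIrreducible ρ) (x : G) :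
    RepIrreducible (RepConj ρ x) := by
  refine ⟨hρ.1, fun p hp => hρ.2 p fun h v hv => ?_⟩
  have hmem : x⁻¹ * (h : G) * x ∈ H := by simpa using hH.conj_mem _ h.2 x⁻¹
  have hkey : conjHom H x ⟨x⁻¹ * (h : G) * x, hmem⟩ = h := by
    ext
    simp [conjHom]
    group
  have := hp ⟨x⁻¹ * (h : G) * x, hmem⟩ v hv
  simpa [RepConj, hkey] using this

theorem mem_IndSpace_iff {W : Type*} [AddCommGroup W] [Module ℂ W] {H : Subgroup G}
    {ρ : Representation ℂ ↥H W} {f : G → W} :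
    f ∈ IndSpace H ρ ↔ ∀ (g : G) (h : ↥H), f (g * h) = ρ h⁻¹ (f g) := Iff.rfl

theorem IndRep_apply {W : Type*} [AddCommGroup W] [Module ℂ W] {H : Subgroup G}
    {ρ : Representation ℂ ↥H W} (x : G) (f : ↥(IndSpace H ρ)) (g : G) :
    ((IndRep H ρ x f : ↥(IndSpace H ρ)) : G → W) g = (f : G → W) (x⁻¹ * g) := rfl

theorem RepRes_apply {V : Type*} [AddCommGroup V] [Module ℂ V] (H : Subgroup G)
    (π : Representation ℂ G V) (h : ↥H) : RepRes H π h = π (h : G) := rfl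

theorem RepConj_apply {W : Type*} [AddCommGroup W] [Module ℂ W] {H : Subgroup G}
    [hH : H.Normal] (ρ : Representation ℂ ↥H W) (x : G) (h : ↥H) :
    RepConj ρ x h = ρ ⟨x * (h : G) * x⁻¹, hH.conj_mem _ h.2 x⟩ := rfl

end AuxRep
/-- If `H ⊴ G` has finite index and `ρ` is an irreducible representation of `H`, then
`Ind_H^G ρ` has finite length (no unbounded strictly increasing chains of invariant
submodules), and every irreducible representation of `G` containing `ρ` in its restriction
to `H` appears as a subrepresentation of `Ind_H^G ρ`. -/
theorem statement16 {G : Type} [Group G] (H : Subgroup G) [H.Normal] [H.FiniteIndex]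
    {W : Type} [AddCommGroup W] [Module ℂ W]
    (ρ : Representation ℂ ↥H W) (hρ : RepIrreducible ρ) :
    (∃ n : ℕ, ∀ (m : ℕ) (c : Fin m → Submodule ℂ ↥(IndSpace H ρ)),
        (∀ i, RepInvariant (IndRep H ρ) (c i)) → StrictMono c → m ≤ n) ∧
    ∀ (V : ModuleCat ℂ) (π : Representation ℂ G V),
      RepIrreducible π → RepContains (RepRes H π) ρ → RepContains (IndRep H ρ) π := by
  classical
  have hH : H.Normal := inferInstance
  constructor
  · -- Part 1 : finite length
    set Q := G ⧸ H with hQ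
    have : Fintype Q := Fintype.ofFinite Q
    obtain ⟨n, e⟩ : ∃ n, Nonempty (Q ≃ Fin n) := ⟨Fintype.card Q, ⟨Fintype.equivFin Q⟩⟩
    obtain ⟨e⟩ := e
    refine ⟨n + 1, ?_⟩
    intro m c hcinv hc
    -- the coset components of the induced representation
    have hcomp_mem : ∀ (q : Q) (f : ↥(IndSpace H ρ)),
        (fun g : G => if (g : Q) = q then (f : G → W) g else 0) ∈ IndSpace H ρ := by
      intro q f
      intro g h
      dsimp only
      have hclass : ((g * (h : G) : G) : Q) = (g : Q) := QuotientGroup.mk_mul_of_mem g h.2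
      by_cases hg : (g : Q) = q
      · rw [if_pos (by rw [hclass]; exact hg), if_pos hg]
        exact f.2 g h
      · rw [if_neg (by rw [hclass]; exact hg), if_neg hg, map_zero]
    set Sq : Q → Submodule ℂ ↥(IndSpace H ρ) := fun q =>
      { carrier := {f | ∀ g : G, (g : Q) ≠ q → (f : G → W) g = 0}
        add_mem' := by
          intro a b ha hb g hgq
          simp [ha g hgq, hb g hgq]
        zero_mem' := by intro g _; rfl
        smul_mem' := by
          intro cc f hf g hgq
          simp [hf g hgq] } with hSq
    have hSq_mem : ∀ (q : Q) (f : ↥(IndSpace H ρ)),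
        f ∈ Sq q ↔ ∀ g : G, (g : Q) ≠ q → (f : G → W) g = 0 := fun q f => Iff.rfl
    set T : Set (Submodule ℂ ↥(IndSpace H ρ)) :=
      {p | RepInvariant (RepRes H (IndRep H ρ)) p} with hT
    have hTsup : ∀ s ∈ T, ∀ t ∈ T, s ⊔ t ∈ T := fun s hs t ht => aux_inv_sup hs ht
    have hSqinv : ∀ q : Q, Sq q ∈ T := by
      intro q h f hf g hgq
      rw [RepRes_apply, IndRep_apply]
      refine hf ((h : G)⁻¹ * g) ?_
      intro hcon
      apply hgq
      rw [← hcon]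
      symm
      apply QuotientGroup.eq.mpr
      simpa [mul_assoc] using hH.conj_mem _ h.2 g⁻¹
    -- injectivity of evaluation on a component
    have keyE : ∀ (q : Q) (f : ↥(IndSpace H ρ)), f ∈ Sq q →
        (f : G → W) q.out = 0 → f = 0 := by
      intro q f hf h0
      apply Subtype.ext
      funext g
      by_cases hg : (g : Q) = q
      · have hk : q.out⁻¹ * g ∈ H := QuotientGroup.eq.mp (by rw [QuotientGroup.out_eq']; exact hg.symm)
        have hge : g = q.out * ((⟨q.out⁻¹ * g, hk⟩ : ↥H) : G) := by
          simp [mul_inv_cancel_left]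
        calc (f : G → W) g = (f : G → W) (q.out * ((⟨q.out⁻¹ * g, hk⟩ : ↥H) : G)) := by rw [← hge]
          _ = ρ (⟨q.out⁻¹ * g, hk⟩ : ↥H)⁻¹ ((f : G → W) q.out) := f.2 q.out _
          _ = 0 := by rw [h0, map_zero]
      · exact hf g hg
    -- the components are H-simple
    have keySimple : ∀ (q : Q) (t : Submodule ℂ ↥(IndSpace H ρ)), t ∈ T → t ≤ Sq q →
        t = ⊥ ∨ t = Sq q := by
      intro q t htinv hle
      set σ : Representation ℂ ↥H W := RepConj ρ q.out⁻¹ with hσdef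
      have hσ : RepIrreducible σ := aux_conj_irred hρ q.out⁻¹
      set E : ↥(IndSpace H ρ) →ₗ[ℂ] W :=
        (LinearMap.proj q.out).comp (IndSpace H ρ).subtype with hE
      have hEapp : ∀ f : ↥(IndSpace H ρ), E f = (f : G → W) q.out := fun f => rfl
      have hEequiv : ∀ (h : ↥H) (f : ↥(IndSpace H ρ)),
          E (RepRes H (IndRep H ρ) h f) = σ h (E f) := by
        intro h f
        have hmem2 : q.out⁻¹ * (h : G) * q.out ∈ H := by
          simpa using hH.conj_mem _ h.2 q.out⁻¹
        set k : ↥H := ⟨q.out⁻¹ * (h : G) * q.out, hmem2⟩ with hk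
        have h1 : (h : G)⁻¹ * q.out = q.out * ((k⁻¹ : ↥H) : G) := by
          show (h : G)⁻¹ * q.out = q.out * (q.out⁻¹ * (h : G) * q.out)⁻¹
          group
        calc E (RepRes H (IndRep H ρ) h f) = (f : G → W) ((h : G)⁻¹ * q.out) := rfl
          _ = (f : G → W) (q.out * ((k⁻¹ : ↥H) : G)) := by rw [h1]
          _ = ρ k⁻¹⁻¹ ((f : G → W) q.out) := f.2 q.out k⁻¹
          _ = σ h (E f) := by
              rw [inv_inv, hEapp, hσdef, RepConj_apply ρ q.out⁻¹ h]
              have hkc : k = (⟨q.out⁻¹ * (h : G) * q.out⁻¹⁻¹,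
                  hH.conj_mem _ h.2 q.out⁻¹⟩ : ↥H) := by
                ext
                simp [hk]
              rw [hkc]
      have hWinv : RepInvariant σ (Submodule.map E t) := by
        intro h w hw
        rcases Submodule.mem_map.mp hw with ⟨f, hf, rfl⟩
        rw [← hEequiv]
        exact Submodule.mem_map_of_mem (htinv h f hf)
      rcases hσ.2 _ hWinv with h0 | htop
      · left
        rw [eq_bot_iff]
        intro f hf
        have hf0 : E f = 0 := by
          have : E f ∈ Submodule.map E t := Submodule.mem_map_of_mem hf
          rw [h0] at this
          simpa using this
        rw [Submodule.mem_bot]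
        exact keyE q f (hle hf) (by rw [← hEapp]; exact hf0)
      · right
        refine le_antisymm hle fun f hf => ?_
        have : E f ∈ Submodule.map E t := by rw [htop]; trivial
        rcases Submodule.mem_map.mp this with ⟨f', hf', hEf⟩
        have hsub : f - f' ∈ Sq q := (Sq q).sub_mem hf (hle hf')
        have h0 : E (f - f') = 0 := by rw [map_sub, hEf, sub_self]
        have : f - f' = 0 := keyE q _ hsub (by rw [← hEapp]; exact h0)
        rw [sub_eq_zero] at this
        rw [this]
        exact hf'
    have hsimp : ∀ (q : Q), ∀ t ∈ T, Sq q ≤ t ∨ Sq q ⊓ t = ⊥ := by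
      intro q t ht
      rcases keySimple q (Sq q ⊓ t) (aux_inv_inf (hSqinv q) ht) inf_le_left with h0 | heq
      · right; exact h0
      · left; exact inf_eq_left.mp heq
    have hsup : (⨆ q : Q, Sq q) = ⊤ := by
      rw [eq_top_iff]
      intro f _
      have hdecomp : f = ∑ q : Q, (⟨fun g : G => if (g : Q) = q then (f : G → W) g else 0,
          hcomp_mem q f⟩ : ↥(IndSpace H ρ)) := by
        apply Subtype.ext
        funext g
        rw [Submodule.coe_sum]
        rw [Finset.sum_apply]
        simp only []
        rw [Finset.sum_ite_eq (Finset.univ : Finset Q) (g : Q)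
          (fun _ => (f : G → W) g)]
        simp
      rw [hdecomp]
      refine Submodule.sum_mem _ fun q _ => ?_
      refine le_iSup Sq q ?_
      intro g hgq
      exact if_neg hgq
    have hchain := aux_chainBound T hTsup n (fun i => Sq (e.symm i))
      (fun i => hSqinv _) (fun i => hsimp _) ⊥
      (by
        rw [bot_sup_eq]
        rw [← hsup]
        exact Equiv.iSup_comp (g := Sq) e.symm)
      m c (fun j h v hv => hcinv j (h : G) v hv) hc (fun j => bot_le)
    exact hchain
  · -- Part 2
    intro V π hπ hcont
    have hWnt : Nontrivial W := hρ.1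
    obtain ⟨j, hjinj, hjcomm⟩ := hcont
    set r : Submodule ℂ V := LinearMap.range j with hr
    have hrinv : RepInvariant (RepRes H π) r := by
      rintro h v ⟨w, rfl⟩
      exact ⟨ρ h w, hjcomm h w⟩
    have hrne : r ≠ ⊥ := by
      obtain ⟨w, hw⟩ := exists_ne (0 : W)
      intro hbot
      have : j w ∈ r := ⟨w, rfl⟩
      rw [hbot, Submodule.mem_bot] at this
      exact hw (hjinj (by rw [this, map_zero]))
    -- r is H-simple
    have hrsimple : ∀ t : Submodule ℂ V, RepInvariant (RepRes H π) t → t ≤ r →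
        t = ⊥ ∨ t = r := by
      intro t htinv hle
      have hcinv : RepInvariant ρ (Submodule.comap j t) := by
        intro h w hw
        rw [Submodule.mem_comap] at hw ⊢
        rw [hjcomm]
        exact htinv h _ hw
      rcases hρ.2 _ hcinv with h0 | htop
      · left
        rw [eq_bot_iff]
        intro v hv
        obtain ⟨w, rfl⟩ := hle hv
        have : w ∈ Submodule.comap j t := hv
        rw [h0, Submodule.mem_bot] at this
        rw [Submodule.mem_bot, this, map_zero]
      · right
        refine le_antisymm hle ?_
        rintro v ⟨w, rfl⟩
        have : w ∈ Submodule.comap j t := by rw [htop]; trivial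
        exact this
    -- moving submodules around by π g
    have hmapmap : ∀ (a b : G) (p : Submodule ℂ V),
        Submodule.map (π a) (Submodule.map (π b) p) = Submodule.map (π (a * b)) p := by
      intro a b p
      rw [← Submodule.map_comp, ← Module.End.mul_eq_comp, ← map_mul]
    have hmapone : ∀ p : Submodule ℂ V, Submodule.map (π 1) p = p := by
      intro p
      rw [map_one, Module.End.one_eq_id, Submodule.map_id]
    have hmapinv : ∀ (x : G) (t : Submodule ℂ V), RepInvariant (RepRes H π) t →
        RepInvariant (RepRes H π) (Submodule.map (π x) t) := by
      intro x t htinv h v hv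
      rcases Submodule.mem_map.mp hv with ⟨u, hu, rfl⟩
      have hk : x⁻¹ * (h : G) * x ∈ H := by simpa using hH.conj_mem _ h.2 x⁻¹
      have hcomm : (RepRes H π) h ((π x) u) = π x (π (x⁻¹ * (h : G) * x) u) := by
        rw [RepRes_apply, ← Module.End.mul_apply, ← map_mul,
          ← Module.End.mul_apply, ← map_mul]
        congr 2
        group
      rw [hcomm]
      exact Submodule.mem_map_of_mem (htinv ⟨x⁻¹ * (h : G) * x, hk⟩ u hu)
    set U : G → Submodule ℂ V := fun g => Submodule.map (π g) r with hU
    have hUinv : ∀ g, RepInvariant (RepRes H π) (U g) := fun g => hmapinv g r hrinv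
    have hUsimple : ∀ (g : G) (t : Submodule ℂ V), RepInvariant (RepRes H π) t →
        t ≤ U g → t = ⊥ ∨ t = U g := by
      intro g t htinv hle
      have h2 : Submodule.map (π g⁻¹) t ≤ r := by
        calc Submodule.map (π g⁻¹) t ≤ Submodule.map (π g⁻¹) (U g) := Submodule.map_mono hle
          _ = r := by rw [hU, hmapmap, inv_mul_cancel, hmapone]
      rcases hrsimple _ (hmapinv g⁻¹ t htinv) h2 with h0 | heq
      · left
        have := congrArg (Submodule.map (π g)) h0
        rwa [hmapmap, mul_inv_cancel, hmapone, Submodule.map_bot] at this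
      · right
        have := congrArg (Submodule.map (π g)) heq
        rwa [hmapmap, mul_inv_cancel, hmapone] at this
    have hUsup : (⨆ g : G, U g) = ⊤ := by
      have hsupinv : RepInvariant π (⨆ g : G, U g) := by
        intro x v hv
        have h1 : π x v ∈ Submodule.map (π x) (⨆ g : G, U g) := Submodule.mem_map_of_mem hv
        rw [Submodule.map_iSup] at h1
        refine (iSup_le fun g => ?_ : (⨆ g : G, Submodule.map (π x) (U g)) ≤ ⨆ g : G, U g) h1
        rw [hU]
        rw [hmapmap]
        exact le_iSup U (x * g)
      rcases hπ.2 _ hsupinv with h0 | htop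
      · exfalso
        apply hrne
        rw [eq_bot_iff]
        calc r = U 1 := (hmapone r).symm
          _ ≤ ⨆ g : G, U g := le_iSup U 1
          _ = ⊥ := h0
      · exact htop
    -- Zorn: an invariant complement of r
    have hzorn : ∃ q : Submodule ℂ V, RepInvariant (RepRes H π) q ∧ IsCompl r q := by
      set A : Set (Submodule ℂ V) := {q | RepInvariant (RepRes H π) q ∧ r ⊓ q = ⊥} with hA
      have hbotA : (⊥ : Submodule ℂ V) ∈ A := by
        constructor
        · intro h v hv
          rw [Submodule.mem_bot] at hv ⊢
          rw [hv, map_zero]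
        · exact inf_bot_eq r
      have hchains : ∀ s ⊆ A, IsChain (· ≤ ·) s → ∀ y ∈ s, ∃ ub ∈ A, ∀ z ∈ s, z ≤ ub := by
        intro s hsub hchain y hy
        refine ⟨sSup s, ⟨?_, ?_⟩, fun z hz => le_sSup hz⟩
        · intro h v hv
          rcases (Submodule.mem_sSup_of_directed ⟨y, hy⟩ hchain.directedOn).mp hv
            with ⟨p, hp, hvp⟩
          exact le_sSup hp ((hsub hp).1 h v hvp)
        · rw [eq_bot_iff]
          intro v hv
          rcases (Submodule.mem_sSup_of_directed ⟨y, hy⟩ hchain.directedOn).mp hv.2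
            with ⟨p, hp, hvp⟩
          have : v ∈ r ⊓ p := ⟨hv.1, hvp⟩
          rw [(hsub hp).2] at this
          exact this
      obtain ⟨q, -, hqA, hqmax⟩ := zorn_le_nonempty₀ A hchains ⊥ hbotA
      have htop2 : r ⊔ q = ⊤ := by
        by_contra hne2
        have hinvsup : RepInvariant (RepRes H π) (r ⊔ q) := aux_inv_sup hrinv hqA.1
        have hex : ∃ g : G, ¬ U g ≤ r ⊔ q := by
          by_contra hall
          push_neg at hall
          exact hne2 (top_le_iff.mp (hUsup ▸ iSup_le hall))
        obtain ⟨g, hg⟩ := hex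
        have hUdisj : U g ⊓ (r ⊔ q) = ⊥ := by
          rcases hUsimple g (U g ⊓ (r ⊔ q)) (aux_inv_inf (hUinv g) hinvsup) inf_le_left
            with h0 | heq
          · exact h0
          · exact absurd (inf_eq_left.mp heq) hg
        have hq'A : (q ⊔ U g) ∈ A := by
          refine ⟨aux_inv_sup hqA.1 (hUinv g), ?_⟩
          have hmod : (q ⊔ U g) ⊓ (q ⊔ r) = q := by
            rw [sup_inf_assoc_of_le _ le_sup_left]
            rw [show U g ⊓ (q ⊔ r) = ⊥ by rw [sup_comm]; exact hUdisj, sup_bot_eq]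
          rw [eq_bot_iff]
          intro v hv
          have h1 : v ∈ (q ⊔ U g) ⊓ (q ⊔ r) := ⟨hv.2, Submodule.mem_sup_right hv.1⟩
          rw [hmod] at h1
          have h2 : v ∈ r ⊓ q := ⟨hv.1, h1⟩
          rw [hqA.2] at h2
          exact h2
        have hltq : q < q ⊔ U g := by
          refine lt_of_le_of_ne le_sup_left fun he => hg ?_
          calc U g ≤ q ⊔ U g := le_sup_right
            _ = q := he.symm
            _ ≤ r ⊔ q := le_sup_right
        exact absurd (hqmax hq'A hltq.le) (not_le_of_gt hltq)
      exact ⟨q, hqA.1, ⟨disjoint_iff.mpr hqA.2, codisjoint_iff.mpr htop2⟩⟩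
    obtain ⟨q, hqinv, hcompl⟩ := hzorn
    set pr : V →ₗ[ℂ] ↥r := Submodule.projectionOnto r q hcompl with hpr
    have hqmem : ∀ v : V, v - ↑(pr v) ∈ q := by
      intro v
      rw [← Submodule.projectionOnto_apply_eq_zero_iff (h := hcompl)]
      rw [map_sub, Submodule.projectionOnto_apply_left hcompl (pr v), sub_self]
    have hprequiv : ∀ (h : ↥H) (v : V), (pr (π (h : G) v) : V) = π (h : G) ((pr v : V)) := by
      intro h v
      have hsplit : π (h : G) v = π (h : G) ↑(pr v) + π (h : G) (v - ↑(pr v)) := by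
        rw [← map_add]
        congr 1
        abel
      have hmem1 : π (h : G) ↑(pr v) ∈ r := hrinv h _ (pr v).2
      have hmem2 : π (h : G) (v - ↑(pr v)) ∈ q := hqinv h _ (hqmem v)
      rw [hsplit, map_add]
      rw [show pr (π (h : G) ↑(pr v)) = ⟨π (h : G) ↑(pr v), hmem1⟩ from
        Submodule.projectionOnto_apply_left hcompl ⟨π (h : G) ↑(pr v), hmem1⟩]
      rw [(Submodule.projectionOnto_apply_eq_zero_iff (h := hcompl)).mpr hmem2]
      simp
    set e : W ≃ₗ[ℂ] ↥r := LinearEquiv.ofInjective j hjinj with he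
    have hecoe : ∀ w : W, ((e w : ↥r) : V) = j w := fun w => rfl
    set φ : V →ₗ[ℂ] W := (e.symm : ↥r →ₗ[ℂ] W).comp pr with hφdef
    have hφapp : ∀ v : V, φ v = e.symm (pr v) := fun v => rfl
    have hφ : ∀ (h : ↥H) (v : V), φ (π (h : G) v) = ρ h (φ v) := by
      intro h v
      have h1 : pr (π (h : G) v) = e (ρ h (e.symm (pr v))) := by
        apply Subtype.ext
        rw [hprequiv h v, hecoe]
        have h2 : j (ρ h (e.symm (pr v))) = π (h : G) (j (e.symm (pr v))) := hjcomm h _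
        rw [h2]
        congr 1
        rw [← hecoe, LinearEquiv.apply_symm_apply]
      rw [hφapp, hφapp, h1, LinearEquiv.symm_apply_apply]
    have hφj : ∀ w : W, φ (j w) = w := by
      intro w
      have h1 : pr (j w) = e w := by
        rw [← hecoe w]
        exact Submodule.projectionOnto_apply_left hcompl (e w)
      rw [hφapp, h1, LinearEquiv.symm_apply_apply]
    -- the Frobenius map
    have hΦmem : ∀ v : V, (fun g : G => φ (π g⁻¹ v)) ∈ IndSpace H ρ := by
      intro v g h
      dsimp only
      have h1 : π (g * (h : G))⁻¹ v = π ((h : G))⁻¹ (π g⁻¹ v) := by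
        rw [mul_inv_rev, map_mul]
        rfl
      rw [h1]
      have h2 : ((h⁻¹ : ↥H) : G) = ((h : G))⁻¹ := rfl
      rw [← h2]
      exact hφ h⁻¹ (π g⁻¹ v)
    set Φ : V →ₗ[ℂ] ↥(IndSpace H ρ) :=
      { toFun := fun v => ⟨fun g => φ (π g⁻¹ v), hΦmem v⟩
        map_add' := fun a b => Subtype.ext (funext fun g => by simp)
        map_smul' := fun cst a => Subtype.ext (funext fun g => by simp) } with hΦdef
    have hΦapp : ∀ (v : V) (g : G), ((Φ v : ↥(IndSpace H ρ)) : G → W) g = φ (π g⁻¹ v) :=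
      fun v g => rfl
    have hΦequiv : ∀ (x : G) (v : V), Φ (π x v) = IndRep H ρ x (Φ v) := by
      intro x v
      apply Subtype.ext
      funext g
      rw [IndRep_apply, hΦapp, hΦapp]
      congr 1
      rw [← Module.End.mul_apply, ← map_mul, mul_inv_rev, inv_inv]
    have hΦinj : Function.Injective Φ := by
      rw [← LinearMap.ker_eq_bot]
      have hkerinv : RepInvariant π (LinearMap.ker Φ) := by
        intro x v hv
        rw [LinearMap.mem_ker] at hv ⊢
        rw [hΦequiv, hv, map_zero]
      rcases hπ.2 _ hkerinv with h0 | htop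
      · exact h0
      · exfalso
        obtain ⟨w, hw⟩ := exists_ne (0 : W)
        have h1 : j w ∈ LinearMap.ker Φ := by rw [htop]; trivial
        rw [LinearMap.mem_ker] at h1
        have h2 : ((Φ (j w) : ↥(IndSpace H ρ)) : G → W) 1 = 0 := by rw [h1]; rfl
        rw [hΦapp] at h2
        rw [inv_one, map_one] at h2
        apply hw
        rw [← hφj w]
        simpa using h2
    exact ⟨Φ, hΦinj, fun x v => hΦequiv x v⟩
end
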